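/- arXiv:2312.05564 — 2 statements merged into one kernel-verified Lean document; each statement's English description precedes it below -/
import Mathlib

section
/- Every finite bipartite simple graph of minimum degree at least 2 has a majority edge coloring with 3 colors. -/
set_option linter.unusedSectionVars false
set_option linter.unusedTactic false
set_option maxHeartbeats 1000000

open Finset
namespace MajAux

variable {V : Type*} [DecidableEq V]

/-- Edges of a vertex list. -/
def edgesOf : List V → List (Sym2 V)
  | a :: b :: t => s(a, b) :: edgesOf (b :: t)
  | _ => []

@[simp] lemma edgesOf_nil : edgesOf ([] : List V) = [] := rfl
@[simp] lemma edgesOf_single (a : V) : edgesOf [a] = [] := rfl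
@[simp] lemma edgesOf_cons_cons (a b : V) (t : List V) :
    edgesOf (a :: b :: t) = s(a, b) :: edgesOf (b :: t) := rfl

lemma edgesOf_append_singleton :
    ∀ (L : List V) (hL : L ≠ []) (w : V),
      edgesOf (L ++ [w]) = edgesOf L ++ [s(L.getLast hL, w)]
  | [a], _, w => rfl
  | a :: b :: t, _, w => by
    have ih := edgesOf_append_singleton (b :: t) (by simp) w
    have h1 : (a :: b :: t) ++ [w] = a :: ((b :: t) ++ [w]) := by simp
    rw [h1, List.getLast_cons (by simp : b :: t ≠ [])]
    have h2 : (b :: t) ++ [w] = b :: (t ++ [w]) := by simp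
    rw [h2, edgesOf_cons_cons, ← h2, ih]
    simp

lemma length_edgesOf : ∀ L : List V, (edgesOf L).length = L.length - 1
  | [] => rfl
  | [a] => rfl
  | a :: b :: t => by
    have ih := length_edgesOf (b :: t)
    simp only [edgesOf_cons_cons, List.length_cons] at *
    omega

/-- Count of edges at `v` colored `b` when list is colored alternately starting with `st`. -/
def altCount (v : V) (b : Bool) : List (Sym2 V) → Bool → ℕ
  | [], _ => 0
  | e :: t, st => (if v ∈ e ∧ st = b then 1 else 0) + altCount v b t (!st)

@[simp] lemma altCount_nil (v : V) (b st : Bool) : altCount v b [] st = 0 := rfl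
@[simp] lemma altCount_cons (v : V) (b : Bool) (e : Sym2 V) (t : List (Sym2 V)) (st : Bool) :
    altCount v b (e :: t) st = (if v ∈ e ∧ st = b then 1 else 0) + altCount v b t (!st) := rfl

/-- Overwrite `g` with an alternating coloring on the list `P`. -/
def altFun : List (Sym2 V) → Bool → (Sym2 V → Bool) → Sym2 V → Bool
  | [], _, g => g
  | e :: t, st, g => fun x => if x = e then st else altFun t (!st) g x

lemma altFun_eq_of_not_mem (g : Sym2 V → Bool) :
    ∀ (P : List (Sym2 V)) (st : Bool) (x : Sym2 V), x ∉ P → altFun P st g x = g x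
  | [], _, _, _ => rfl
  | e :: t, st, x, hx => by
    have hxe : x ≠ e := by simp at hx; tauto
    have hxt : x ∉ t := by simp at hx; tauto
    simp only [altFun, if_neg hxe]
    exact altFun_eq_of_not_mem g t (!st) x hxt

lemma card_filter_altFun (v : V) (b : Bool) (g : Sym2 V → Bool) :
    ∀ (P : List (Sym2 V)) (st : Bool), P.Nodup →
      ((P.toFinset).filter (fun e => v ∈ e ∧ altFun P st g e = b)).card = altCount v b P st
  | [], st, _ => by simp
  | e :: t, st, hnd => by
    have het : e ∉ t := by simp at hnd; tauto
    have hndt : t.Nodup := by simp at hnd; tauto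
    have hcongr : (t.toFinset).filter (fun x => v ∈ x ∧ altFun (e :: t) st g x = b)
        = (t.toFinset).filter (fun x => v ∈ x ∧ altFun t (!st) g x = b) := by
      apply Finset.filter_congr
      intro x hx
      have hxe : x ≠ e := by rintro rfl; exact het (List.mem_toFinset.mp hx)
      simp [altFun, if_neg hxe]
    have hself : altFun (e :: t) st g e = st := by simp [altFun]
    rw [List.toFinset_cons, Finset.filter_insert]
    by_cases hv : v ∈ e ∧ st = b
    · rw [if_pos (by simpa [hself] using hv)]
      rw [Finset.card_insert_of_notMem (by
        intro hmem
        exact het (List.mem_toFinset.mp (Finset.mem_of_mem_filter _ hmem)))]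
      rw [hcongr, card_filter_altFun v b g t (!st) hndt]
      simp only [altCount_cons, if_pos hv]
      omega
    · rw [if_neg (by simpa [hself] using hv)]
      rw [hcongr, card_filter_altFun v b g t (!st) hndt]
      simp only [altCount_cons, if_neg hv]
      omega

/-- Signed discrepancy of the alternating coloring at `v`. -/
def diffZ (v : V) (P : List (Sym2 V)) (st : Bool) : ℤ :=
  (altCount v true P st : ℤ) - altCount v false P st

def eps : Bool → ℤ := fun s => if s then 1 else -1

lemma diffZ_nil (v : V) (st : Bool) : diffZ v [] st = 0 := rfl

lemma diffZ_cons (v : V) (e : Sym2 V) (t : List (Sym2 V)) (st : Bool) :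
    diffZ v (e :: t) st = (if v ∈ e then eps st else 0) + diffZ v t (!st) := by
  simp only [diffZ, altCount_cons]
  cases st <;> by_cases h : v ∈ e <;> simp [h, eps] <;> push_cast <;> ring

lemma diffZ_edgesOf (v : V) :
    ∀ (t : List V) (a b : V) (st : Bool), a ≠ b → (b :: t).Chain' (· ≠ ·) →
      diffZ v (edgesOf (a :: b :: t)) st
        = eps st * ((if v = a then 1 else 0)
            + (-1 : ℤ) ^ t.length * (if v = (b :: t).getLast (by simp) then 1 else 0))
  | [], a, b, st, hab, _ => by
    simp only [edgesOf_cons_cons, edgesOf_single, diffZ_cons, diffZ_nil, List.length_nil,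
      pow_zero, List.getLast_singleton]
    have hm : (v ∈ s(a, b)) = (v = a ∨ v = b) := by simp [Sym2.mem_iff]
    rcases eq_or_ne v a with rfl | hva <;> rcases eq_or_ne v b with rfl | hvb
    · exact absurd rfl hab
    · simp [hm, hvb]
    · simp [hm, hva]
    · simp [hm, hva, hvb]
  | c :: t', a, b, st, hab, hch => by
    have hbc : b ≠ c := (List.isChain_cons_cons.mp hch).1
    have hch' : (c :: t').Chain' (· ≠ ·) := (List.isChain_cons_cons.mp hch).2
    have ih := diffZ_edgesOf v t' b c (!st) hbc hch'
    have hlast : (b :: c :: t').getLast (by simp) = (c :: t').getLast (by simp) :=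
      List.getLast_cons (by simp)
    have heps : eps (!st) = - eps st := by cases st <;> simp [eps]
    rw [edgesOf_cons_cons, diffZ_cons, ih, hlast, heps, List.length_cons, pow_succ]
    have hm : (v ∈ s(a, b)) = (v = a ∨ v = b) := by simp [Sym2.mem_iff]
    set IL := (if v = (c :: t').getLast (by simp) then (1 : ℤ) else 0) with hIL
    rcases eq_or_ne v a with rfl | hva <;> rcases eq_or_ne v b with rfl | hvb
    · exact absurd rfl hab
    · simp only [hm]
      simp [hvb]
      try ring
    · simp only [hm]
      simp [hva]
      try ring
    · simp only [hm]
      simp [hva, hvb]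
      try ring


lemma chain'_ne_of_edges : ∀ (L : List V), (∀ e ∈ edgesOf L, ¬ e.IsDiag) →
    L.Chain' (· ≠ ·)
  | [], _ => List.isChain_nil
  | [a], _ => List.isChain_singleton a
  | a :: b :: t, h => by
    refine List.isChain_cons_cons.mpr ?_
    refine ⟨fun hab => h s(a, b) (by simp) (by simp [hab]), ?_⟩
    exact chain'_ne_of_edges (b :: t) (fun e he => h e (by simp [he]))

lemma chain'_bool_of_edges (f : V → Bool) : ∀ (L : List V),
    (∀ e ∈ edgesOf L, ∀ x y : V, e = s(x, y) → f x ≠ f y) →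
    L.Chain' (fun x y => f x ≠ f y)
  | [], _ => List.isChain_nil
  | [a], _ => List.isChain_singleton a
  | a :: b :: t, h => by
    refine List.isChain_cons_cons.mpr ?_
    exact ⟨h s(a, b) (by simp) a b rfl,
      chain'_bool_of_edges f (b :: t) (fun e he => h e (by simp [he]))⟩

lemma parity_getLast (f : V → Bool) : ∀ (t : List V) (a : V),
    (a :: t).Chain' (fun x y => f x ≠ f y) →
    (f ((a :: t).getLast (by simp)) = f a ↔ Even t.length)
  | [], a, _ => by simp
  | b :: t', a, hch => by
    have h1 : f a ≠ f b := (List.isChain_cons_cons.mp hch).1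
    have ih := parity_getLast f t' b (List.isChain_cons_cons.mp hch).2
    rw [List.getLast_cons (by simp : b :: t' ≠ [])]
    rw [List.length_cons, Nat.even_add_one, ← ih]
    set c := (b :: t').getLast (by simp)
    revert h1
    cases hfa : f a <;> cases hfb : f b <;> cases hfc : f c <;> simp

/-- A trail in edge set `E`. -/
def IsTrail (E : Finset (Sym2 V)) (L : List V) : Prop :=
  2 ≤ L.length ∧ (∀ e ∈ edgesOf L, e ∈ E) ∧ (edgesOf L).Nodup

lemma IsTrail.ne_nil {E : Finset (Sym2 V)} {L : List V} (h : IsTrail E L) : L ≠ [] := by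
  intro hL; rw [hL] at h; simp [IsTrail] at h

lemma IsTrail.length_le {E : Finset (Sym2 V)} {L : List V} (h : IsTrail E L) :
    L.length ≤ E.card + 1 := by
  have h1 : (edgesOf L).toFinset ⊆ E := fun e he => h.2.1 e (List.mem_toFinset.mp he)
  have h2 : (edgesOf L).toFinset.card = (edgesOf L).length := List.toFinset_card_of_nodup h.2.2
  have h3 := Finset.card_le_card h1
  have h4 := length_edgesOf L
  have h5 := h.1
  omega

lemma IsTrail.cons {E : Finset (Sym2 V)} {a : V} {t : List V} (h : IsTrail E (a :: t))
    {w : V} (hw : s(a, w) ∈ E) (hnot : s(a, w) ∉ edgesOf (a :: t)) :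
    IsTrail E (w :: a :: t) := by
  have hswap : s(w, a) = s(a, w) := Sym2.eq_swap
  refine ⟨by simp, ?_, ?_⟩
  · intro e he
    rcases List.mem_cons.mp (by simpa using he) with rfl | hmem
    · rwa [hswap]
    · exact h.2.1 e hmem
  · refine List.nodup_cons.mpr ⟨?_, h.2.2⟩
    rw [hswap]; exact hnot

lemma IsTrail.concat {E : Finset (Sym2 V)} {L : List V} (h : IsTrail E L)
    {w : V} (hw : s(L.getLast h.ne_nil, w) ∈ E)
    (hnot : s(L.getLast h.ne_nil, w) ∉ edgesOf L) :
    IsTrail E (L ++ [w]) := by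
  have he : edgesOf (L ++ [w]) = edgesOf L ++ [s(L.getLast h.ne_nil, w)] :=
    edgesOf_append_singleton L h.ne_nil w
  refine ⟨by simp; have := h.1; omega, ?_, ?_⟩
  · intro e hmem
    rw [he] at hmem
    rcases List.mem_append.mp hmem with hmem | hmem
    · exact h.2.1 e hmem
    · rcases List.mem_singleton.mp hmem with rfl
      exact hw
  · rw [he]
    refine h.2.2.append (List.nodup_singleton _) ?_
    intro e hmem hmem'
    rw [List.mem_singleton] at hmem'
    subst hmem'
    exact hnot hmem

lemma exists_maximal_trail (E : Finset (Sym2 V)) :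
    ∀ (n : ℕ) (L0 : List V), IsTrail E L0 → E.card + 1 - L0.length ≤ n →
    ∃ (L : List V) (hL : IsTrail E L),
      (∀ w : V, s(L.head hL.ne_nil, w) ∈ E → s(L.head hL.ne_nil, w) ∈ edgesOf L) ∧
      (∀ w : V, s(L.getLast hL.ne_nil, w) ∈ E → s(L.getLast hL.ne_nil, w) ∈ edgesOf L) := by
  intro n
  induction n with
  | zero =>
    intro L0 h0 hn
    have hlen := h0.length_le
    refine ⟨L0, h0, ?_, ?_⟩
    · intro w hw
      by_contra hnot
      obtain ⟨a, t, rfl⟩ : ∃ a t, L0 = a :: t := by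
        cases L0 with
        | nil => exact absurd rfl h0.ne_nil
        | cons a t => exact ⟨a, t, rfl⟩
      have hhead : (a :: t).head h0.ne_nil = a := rfl
      rw [hhead] at hw hnot
      have h1 : IsTrail E (w :: a :: t) := h0.cons hw hnot
      have := h1.length_le
      simp only [List.length_cons] at this hn hlen
      omega
    · intro w hw
      by_contra hnot
      have h1 : IsTrail E (L0 ++ [w]) := h0.concat hw hnot
      have := h1.length_le
      simp only [List.length_append, List.length_singleton] at this
      omega
  | succ n ih =>
    intro L0 h0 hn
    by_cases hf : ∃ w : V, s(L0.head h0.ne_nil, w) ∈ E ∧ s(L0.head h0.ne_nil, w) ∉ edgesOf L0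
    · obtain ⟨w, hw, hnot⟩ := hf
      obtain ⟨a, t, rfl⟩ : ∃ a t, L0 = a :: t := by
        cases L0 with
        | nil => exact absurd rfl h0.ne_nil
        | cons a t => exact ⟨a, t, rfl⟩
      have hhead : (a :: t).head h0.ne_nil = a := rfl
      rw [hhead] at hw hnot
      have h1 : IsTrail E (w :: a :: t) := h0.cons hw hnot
      refine ih (w :: a :: t) h1 ?_
      have := h1.length_le
      simp only [List.length_cons] at this hn ⊢
      omega
    · by_cases hb : ∃ w : V, s(L0.getLast h0.ne_nil, w) ∈ E ∧
          s(L0.getLast h0.ne_nil, w) ∉ edgesOf L0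
      · obtain ⟨w, hw, hnot⟩ := hb
        have h1 : IsTrail E (L0 ++ [w]) := h0.concat hw hnot
        refine ih (L0 ++ [w]) h1 ?_
        have := h1.length_le
        simp only [List.length_append, List.length_singleton] at this hn ⊢
        omega
      · push_neg at hf hb
        exact ⟨L0, h0, fun w hw => hf w hw, fun w hw => hb w hw⟩


/-- Balanced 2-split of a bipartite edge set: the edges can be 2-colored so that at every
vertex the two color classes differ in size by at most 1. -/
lemma bal2 (f : V → Bool) :
    ∀ (n : ℕ) (E : Finset (Sym2 V)), E.card ≤ n →
    (∀ e ∈ E, ¬ e.IsDiag) →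
    (∀ e ∈ E, ∀ x y : V, e = s(x, y) → f x ≠ f y) →
    ∃ σ : Sym2 V → Bool, ∀ v : V,
      |((E.filter (fun e => v ∈ e ∧ σ e = true)).card : ℤ)
        - ((E.filter (fun e => v ∈ e ∧ σ e = false)).card : ℤ)| ≤ 1 := by
  intro n
  induction n with
  | zero =>
    intro E hcard _ _
    have : E = ∅ := Finset.card_eq_zero.mp (by omega)
    subst this
    exact ⟨fun _ => true, by simp⟩
  | succ n ih =>
    intro E hcard hd hx
    rcases Finset.eq_empty_or_nonempty E with rfl | ⟨e₀, he₀⟩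
    · exact ⟨fun _ => true, by simp⟩
    obtain ⟨x, y, hxy⟩ : ∃ x y : V, e₀ = s(x, y) :=
      Sym2.ind (f := fun z => ∃ x y : V, z = s(x, y)) (fun x y => ⟨x, y, rfl⟩) e₀
    subst hxy
    have hne : x ≠ y := by
      intro h
      exact hd _ he₀ (by simp [h])
    have htrail0 : IsTrail E [x, y] := by
      refine ⟨by simp, ?_, by simp⟩
      intro e he
      have : e = s(x, y) := by simpa [edgesOf] using he
      rwa [this]
    obtain ⟨L, hL, hmaxf, hmaxb⟩ :=
      exists_maximal_trail E (E.card + 1) [x, y] htrail0 (by omega)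
    obtain ⟨a, b, t, rfl⟩ : ∃ a b t, L = a :: b :: t := by
      have h2 := hL.1
      cases L with
      | nil => simp at h2
      | cons a t0 =>
        cases t0 with
        | nil => simp at h2
        | cons b t => exact ⟨a, b, t, rfl⟩
    have hPnd : (edgesOf (a :: b :: t)).Nodup := hL.2.2
    have hPE : ∀ e ∈ edgesOf (a :: b :: t), e ∈ E := hL.2.1
    have hPF : (edgesOf (a :: b :: t)).toFinset ⊆ E :=
      fun e he => hPE e (List.mem_toFinset.mp he)
    have hPne : s(a, b) ∈ edgesOf (a :: b :: t) := by simp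
    have hcard' : (E \ (edgesOf (a :: b :: t)).toFinset).card ≤ n := by
      have h1 : s(a, b) ∈ E := hPE _ hPne
      have h2 : s(a, b) ∉ E \ (edgesOf (a :: b :: t)).toFinset := by simp [hPne]
      have hss : E \ (edgesOf (a :: b :: t)).toFinset ⊂ E :=
        ⟨Finset.sdiff_subset, fun hsup => h2 (hsup h1)⟩
      have := Finset.card_lt_card hss
      omega
    obtain ⟨σ', hσ'⟩ := ih (E \ (edgesOf (a :: b :: t)).toFinset) hcard'
      (fun e he => hd e (Finset.sdiff_subset he))
      (fun e he => hx e (Finset.sdiff_subset he))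
    refine ⟨altFun (edgesOf (a :: b :: t)) true σ', ?_⟩
    intro v
    -- split the counting between the peeled trail and the rest
    have hsplitE : E = (E \ (edgesOf (a :: b :: t)).toFinset) ∪ (edgesOf (a :: b :: t)).toFinset :=
      (Finset.sdiff_union_of_subset hPF).symm
    have hcount : ∀ bb : Bool,
        ((E.filter (fun e => v ∈ e ∧ altFun (edgesOf (a :: b :: t)) true σ' e = bb)).card)
          = ((E \ (edgesOf (a :: b :: t)).toFinset).filter
              (fun e => v ∈ e ∧ σ' e = bb)).card
            + altCount v bb (edgesOf (a :: b :: t)) true := by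
      intro bb
      conv_lhs => rw [hsplitE]
      rw [Finset.filter_union, Finset.card_union_of_disjoint
        (Finset.disjoint_filter_filter Finset.sdiff_disjoint)]
      congr 1
      · refine congrArg Finset.card (Finset.filter_congr ?_)
        intro e he
        have hnp : e ∉ edgesOf (a :: b :: t) :=
          fun hmem => (Finset.mem_sdiff.mp he).2 (List.mem_toFinset.mpr hmem)
        rw [altFun_eq_of_not_mem σ' (edgesOf (a :: b :: t)) true e hnp]
      · exact card_filter_altFun v bb σ' (edgesOf (a :: b :: t)) true hPnd
    have hchain : (a :: b :: t).Chain' (· ≠ ·) :=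
      chain'_ne_of_edges _ (fun e he => hd e (hPE e he))
    have hab : a ≠ b := (List.isChain_cons_cons.mp hchain).1
    have hchbt : (b :: t).Chain' (· ≠ ·) := (List.isChain_cons_cons.mp hchain).2
    have hDZ := diffZ_edgesOf v t a b true hab hchbt
    have hepsone : eps true = 1 := rfl
    rw [hepsone, one_mul] at hDZ
    have hdq := hσ' v
    rw [abs_le] at hdq ⊢
    have hkey : ((E.filter (fun e => v ∈ e ∧ altFun (edgesOf (a :: b :: t)) true σ' e = true)).card : ℤ)
        - ((E.filter (fun e => v ∈ e ∧ altFun (edgesOf (a :: b :: t)) true σ' e = false)).card : ℤ)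
        = (((E \ (edgesOf (a :: b :: t)).toFinset).filter (fun e => v ∈ e ∧ σ' e = true)).card : ℤ)
          - (((E \ (edgesOf (a :: b :: t)).toFinset).filter (fun e => v ∈ e ∧ σ' e = false)).card : ℤ)
          + diffZ v (edgesOf (a :: b :: t)) true := by
      rw [hcount true, hcount false]
      unfold diffZ
      push_cast
      ring
    rw [hkey, hDZ]
    -- getLast facts
    have hlastL : (a :: b :: t).getLast hL.ne_nil = (b :: t).getLast (by simp) :=
      List.getLast_cons (by simp)
    by_cases hclosed : a = (b :: t).getLast (by simp)
    · -- closed trail: it has evenly many edges, so contributes 0 at every vertex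
      have hfch : (a :: b :: t).Chain' (fun p q => f p ≠ f q) :=
        chain'_bool_of_edges f _ (fun e he => hx e (hPE e he))
      have hpar := (parity_getLast f (b :: t) a hfch)
      have hgl : ((a :: b :: t).getLast (by simp)) = (b :: t).getLast (by simp) :=
        List.getLast_cons (by simp)
      rw [hgl, ← hclosed] at hpar
      have hev : Even ((b : V) :: t).length := hpar.mp rfl
      have hodd : Odd t.length := by
        rcases hev with ⟨k, hk⟩
        simp only [List.length_cons] at hk
        exact ⟨k - 1, by omega⟩
      rw [hodd.neg_one_pow]
      rcases eq_or_ne v a with rfl | hva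
      · rw [if_pos rfl, if_pos hclosed]
        constructor <;> omega
      · rw [if_neg hva, if_neg (by rw [← hclosed]; exact hva)]
        constructor <;> omega
    · -- open trail
      by_cases hva : v = a
      · -- at the head endpoint, every E-edge lies on the trail
        subst hva
        have hzero : ∀ bb : Bool,
            ((E \ (edgesOf (v :: b :: t)).toFinset).filter
              (fun e => v ∈ e ∧ σ' e = bb)).card = 0 := by
          intro bb
          rw [Finset.card_eq_zero, Finset.filter_eq_empty_iff]
          rintro e he ⟨hv, -⟩
          have hspec : s(v, Sym2.Mem.other hv) = e := Sym2.other_spec hv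
          have heE : s(v, Sym2.Mem.other hv) ∈ E := by
            rw [hspec]; exact Finset.sdiff_subset he
          have hhead : (v :: b :: t).head hL.ne_nil = v := rfl
          have := hmaxf (Sym2.Mem.other hv) (by rwa [hhead])
          rw [hhead] at this
          rw [hspec] at this
          exact (Finset.mem_sdiff.mp he).2 (List.mem_toFinset.mpr this)
        rw [hzero true, hzero false]
        rw [if_pos rfl, if_neg (by rw [← ne_eq] at hclosed ⊢; exact hclosed)]
        simp only [Nat.cast_zero, sub_zero, zero_add, mul_zero, add_zero]
        constructor <;> omega
      · by_cases hvl : v = (b :: t).getLast (by simp)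
        · -- at the back endpoint
          have hzero : ∀ bb : Bool,
              ((E \ (edgesOf (a :: b :: t)).toFinset).filter
                (fun e => v ∈ e ∧ σ' e = bb)).card = 0 := by
            intro bb
            rw [Finset.card_eq_zero, Finset.filter_eq_empty_iff]
            rintro e he ⟨hv, -⟩
            have hspec : s(v, Sym2.Mem.other hv) = e := Sym2.other_spec hv
            have heE : s(v, Sym2.Mem.other hv) ∈ E := by
              rw [hspec]; exact Finset.sdiff_subset he
            have := hmaxb (Sym2.Mem.other hv) (by rwa [hlastL, ← hvl])
            rw [hlastL, ← hvl, hspec] at this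
            exact (Finset.mem_sdiff.mp he).2 (List.mem_toFinset.mpr this)
          rw [hzero true, hzero false]
          rw [if_neg hva, if_pos hvl]
          rcases Nat.even_or_odd t.length with hev | hodd
          · rw [hev.neg_one_pow]
            constructor <;> omega
          · rw [hodd.neg_one_pow]
            constructor <;> omega
        · rw [if_neg hva, if_neg hvl]
          simp only [mul_zero, add_zero, mul_one, zero_add]
          constructor <;> omega


lemma sq_le_sq_of_bal {a b a' b' : ℤ} (hsum : a' + b' = a + b)
    (h1 : -1 ≤ a' - b') (h2 : a' - b' ≤ 1) :
    a' ^ 2 + b' ^ 2 ≤ a ^ 2 + b ^ 2 := by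
  have key : (a' - b') ^ 2 ≤ (a - b) ^ 2 := by
    rcases eq_or_ne a b with heq | hne
    · subst heq
      have h3 : a' = b' := by omega
      rw [h3, sub_self]
      positivity
    · have h3 : a - b ≤ -1 ∨ 1 ≤ a - b := by
        rcases lt_or_gt_of_ne hne with h | h
        · left; omega
        · right; omega
      have h4 : (a' - b') ^ 2 ≤ 1 := by nlinarith
      rcases h3 with h3 | h3 <;> nlinarith
  have hs2 : (a' + b') ^ 2 = (a + b) ^ 2 := by rw [hsum]
  nlinarith [key, hs2]

lemma sq_lt_sq_of_bal {a b a' b' : ℤ} (hsum : a' + b' = a + b)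
    (h1 : -1 ≤ a' - b') (h2 : a' - b' ≤ 1) (hgap : b + 2 ≤ a) :
    a' ^ 2 + b' ^ 2 < a ^ 2 + b ^ 2 := by
  have key : (a' - b') ^ 2 < (a - b) ^ 2 := by
    have h4 : (a' - b') ^ 2 ≤ 1 := by nlinarith
    nlinarith
  have hs2 : (a' + b') ^ 2 = (a + b) ^ 2 := by rw [hsum]
  nlinarith [key, hs2]

lemma fin3_cover : ∀ α β : Fin 3, α ≠ β → ∃ γ : Fin 3, γ ≠ α ∧ γ ≠ β ∧
    (Finset.univ : Finset (Fin 3)) = {α, β, γ} := by decide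

lemma fin3_cover1 : ∀ δ : Fin 3, ∃ β₁ β₂ : Fin 3, δ ≠ β₁ ∧ δ ≠ β₂ ∧ β₁ ≠ β₂ ∧
    (Finset.univ : Finset (Fin 3)) = {δ, β₁, β₂} := by decide

lemma fin3_sum (α β γ : Fin 3) (hab : α ≠ β) (hag : α ≠ γ) (hbg : β ≠ γ)
    (huniv : (Finset.univ : Finset (Fin 3)) = {α, β, γ}) (g : Fin 3 → ℕ) :
    ∑ δ : Fin 3, g δ = g α + g β + g γ := by
  rw [huniv, Finset.sum_insert (by simp [hab, hag]),
    Finset.sum_insert (by simp [hbg]), Finset.sum_singleton]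
  omega

section Graph

variable [Fintype V] (G : SimpleGraph V) [DecidableRel G.Adj]

lemma card_nbr_eq_card_edge (u : V) (p : Sym2 V → Prop) [DecidablePred p] :
    ((G.neighborFinset u).filter (fun v => p s(u, v))).card
      = (G.edgeFinset.filter (fun e => u ∈ e ∧ p e)).card := by
  apply Finset.card_bij (fun v _ => s(u, v))
  · intro v hv
    rw [Finset.mem_filter] at hv ⊢
    obtain ⟨hv1, hv2⟩ := hv
    rw [SimpleGraph.mem_neighborFinset] at hv1
    exact ⟨SimpleGraph.mem_edgeFinset.mpr hv1, Sym2.mem_mk_left u v, hv2⟩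
  · intro v1 _ v2 _ he
    exact Sym2.congr_right.mp he
  · intro e he
    rw [Finset.mem_filter] at he
    obtain ⟨heE, hrest⟩ := he
    obtain ⟨hu, hp⟩ := hrest
    refine ⟨Sym2.Mem.other hu, ?_, Sym2.other_spec hu⟩
    rw [Finset.mem_filter, SimpleGraph.mem_neighborFinset]
    constructor
    · have : s(u, Sym2.Mem.other hu) ∈ G.edgeSet := by
        rw [Sym2.other_spec hu]; exact SimpleGraph.mem_edgeFinset.mp heE
      exact this
    · rw [Sym2.other_spec hu]; exact hp

/-- Number of edges at `u` having color `α`. -/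
def cnt (c : Sym2 V → Fin 3) (u : V) (α : Fin 3) : ℕ :=
  (G.edgeFinset.filter (fun e => u ∈ e ∧ c e = α)).card

lemma cnt_eq (c : Sym2 V → Fin 3) (u : V) (α : Fin 3) :
    ((G.neighborFinset u).filter (fun v => c s(u, v) = α)).card = cnt G c u α :=
  card_nbr_eq_card_edge G u (fun e => c e = α)

lemma sum_cnt (c : Sym2 V → Fin 3) (u : V) :
    ∑ α : Fin 3, cnt G c u α = G.degree u := by
  have h1 : G.degree u = (G.neighborFinset u).card := rfl
  have h2 : (G.neighborFinset u).card
      = ∑ α : Fin 3, ((G.neighborFinset u).filter (fun v => c s(u, v) = α)).card :=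
    Finset.card_eq_sum_card_fiberwise (fun v _ => Finset.mem_univ _)
  rw [h1, h2]
  exact Finset.sum_congr rfl (fun α _ => (cnt_eq G c u α).symm)

/-- The edges colored `α` or `β`. -/
def Epair (c : Sym2 V → Fin 3) (α β : Fin 3) : Finset (Sym2 V) :=
  G.edgeFinset.filter (fun e => c e = α ∨ c e = β)

/-- The recoloring of the `α`/`β` edges according to `σ`. -/
def recol (c : Sym2 V → Fin 3) (α β : Fin 3) (σ : Sym2 V → Bool) : Sym2 V → Fin 3 :=
  fun e => if c e = α ∨ c e = β then (if σ e then α else β) else c e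

lemma rebalance (f : V → Bool) (hf : ∀ p q : V, G.Adj p q → f p ≠ f q)
    (c : Sym2 V → Fin 3) (α β : Fin 3) (hαβ : α ≠ β) :
    ∃ c' : Sym2 V → Fin 3,
      (∀ u (γ : Fin 3), γ ≠ α → γ ≠ β → cnt G c' u γ = cnt G c u γ) ∧
      (∀ u, cnt G c' u α + cnt G c' u β = cnt G c u α + cnt G c u β) ∧
      (∀ u, |(cnt G c' u α : ℤ) - (cnt G c' u β : ℤ)| ≤ 1) := by
  have hd : ∀ e ∈ Epair G c α β, ¬ e.IsDiag := fun e he =>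
    G.not_isDiag_of_mem_edgeSet (SimpleGraph.mem_edgeFinset.mp (Finset.mem_filter.mp he).1)
  have hx : ∀ e ∈ Epair G c α β, ∀ p q : V, e = s(p, q) → f p ≠ f q := by
    intro e he p q hepq
    apply hf
    have h1 : e ∈ G.edgeSet := SimpleGraph.mem_edgeFinset.mp (Finset.mem_filter.mp he).1
    rw [hepq] at h1
    exact h1
  obtain ⟨σ, hσ⟩ := bal2 f (Epair G c α β).card (Epair G c α β) le_rfl hd hx
  refine ⟨recol c α β σ, ?_, ?_, ?_⟩
  all_goals
    have hα' : ∀ e : Sym2 V, (recol c α β σ e = α ↔ ((c e = α ∨ c e = β) ∧ σ e = true)) := by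
      intro e
      show (if c e = α ∨ c e = β then (if σ e then α else β) else c e) = α ↔ _
      by_cases h1 : c e = α ∨ c e = β
      · rw [if_pos h1]
        by_cases h2 : σ e = true
        · rw [if_pos h2]; simp [h1, h2]
        · rw [if_neg h2]; simp [Ne.symm hαβ, h2]
      · rw [if_neg h1]
        push_neg at h1
        simp [h1.1, h1.2]
    have hβ' : ∀ e : Sym2 V, (recol c α β σ e = β ↔ ((c e = α ∨ c e = β) ∧ σ e = false)) := by
      intro e
      show (if c e = α ∨ c e = β then (if σ e then α else β) else c e) = β ↔ _
      by_cases h1 : c e = α ∨ c e = β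
      · rw [if_pos h1]
        by_cases h2 : σ e = true
        · rw [if_pos h2]
          have h3 : σ e ≠ false := by simp [h2]
          simp [hαβ, h3]
        · rw [if_neg h2]
          have h3 : σ e = false := by revert h2; cases σ e <;> simp
          simp [h1, h3]
      · rw [if_neg h1]
        push_neg at h1
        simp [h1.1, h1.2]
    have hcnt'α : ∀ u : V, cnt G (recol c α β σ) u α
        = ((Epair G c α β).filter (fun e => u ∈ e ∧ σ e = true)).card := by
      intro u
      unfold cnt Epair
      rw [Finset.filter_filter]
      refine congrArg Finset.card (Finset.filter_congr ?_)
      intro e _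
      rw [hα' e]
      tauto
    have hcnt'β : ∀ u : V, cnt G (recol c α β σ) u β
        = ((Epair G c α β).filter (fun e => u ∈ e ∧ σ e = false)).card := by
      intro u
      unfold cnt Epair
      rw [Finset.filter_filter]
      refine congrArg Finset.card (Finset.filter_congr ?_)
      intro e _
      rw [hβ' e]
      tauto
    skip
  · -- colors other than α, β are untouched
    intro u γ hγα hγβ
    have hγ' : ∀ e : Sym2 V, (recol c α β σ e = γ ↔ c e = γ) := by
      intro e
      show (if c e = α ∨ c e = β then (if σ e then α else β) else c e) = γ ↔ _
      by_cases h1 : c e = α ∨ c e = β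
      · rw [if_pos h1]
        by_cases h2 : σ e = true
        · rw [if_pos h2]
          constructor
          · intro h3; exact absurd h3.symm hγα
          · intro h3
            rcases h1 with h1 | h1 <;> rw [h3] at h1
            · exact absurd h1 hγα
            · exact absurd h1 hγβ
        · rw [if_neg h2]
          constructor
          · intro h3; exact absurd h3.symm hγβ
          · intro h3
            rcases h1 with h1 | h1 <;> rw [h3] at h1
            · exact absurd h1 hγα
            · exact absurd h1 hγβ
      · rw [if_neg h1]
    unfold cnt
    refine congrArg Finset.card (Finset.filter_congr ?_)
    intro e _
    rw [hγ' e]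
  · -- the pair sums are preserved
    intro u
    rw [hcnt'α u, hcnt'β u]
    have hsplit1 : ((Epair G c α β).filter (fun e => u ∈ e ∧ σ e = true)).card
        + ((Epair G c α β).filter (fun e => u ∈ e ∧ σ e = false)).card
        = ((Epair G c α β).filter (fun e => u ∈ e)).card := by
      have h0 := Finset.card_filter_add_card_filter_not
        (s := (Epair G c α β).filter (fun e => u ∈ e)) (p := fun e => σ e = true)
      rw [Finset.filter_filter, Finset.filter_filter] at h0
      rw [← h0]
      congr 1
      refine congrArg Finset.card (Finset.filter_congr ?_)
      intro e _
      simp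
    have hsplit2 : ((Epair G c α β).filter (fun e => u ∈ e ∧ c e = α)).card
        + ((Epair G c α β).filter (fun e => u ∈ e ∧ c e = β)).card
        = ((Epair G c α β).filter (fun e => u ∈ e)).card := by
      have h0 := Finset.card_filter_add_card_filter_not
        (s := (Epair G c α β).filter (fun e => u ∈ e)) (p := fun e => c e = α)
      rw [Finset.filter_filter, Finset.filter_filter] at h0
      rw [← h0]
      congr 1
      refine congrArg Finset.card (Finset.filter_congr ?_)
      intro e he
      have hmem : c e = α ∨ c e = β := by
        have h8 := he
        unfold Epair at h8
        exact (Finset.mem_filter.mp h8).2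
      constructor
      · rintro ⟨h3, h4⟩
        refine ⟨h3, ?_⟩
        intro h5
        rw [h4] at h5
        exact hαβ (by rw [← h5])
      · rintro ⟨h3, h4⟩
        refine ⟨h3, ?_⟩
        rcases hmem with hmem | hmem
        · exact absurd hmem h4
        · exact hmem
    have hcα : cnt G c u α = ((Epair G c α β).filter (fun e => u ∈ e ∧ c e = α)).card := by
      unfold cnt Epair
      rw [Finset.filter_filter]
      refine congrArg Finset.card (Finset.filter_congr ?_)
      intro e _
      tauto
    have hcβ : cnt G c u β = ((Epair G c α β).filter (fun e => u ∈ e ∧ c e = β)).card := by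
      unfold cnt Epair
      rw [Finset.filter_filter]
      refine congrArg Finset.card (Finset.filter_congr ?_)
      intro e _
      tauto
    rw [hcα, hcβ, hsplit1, hsplit2]
  · -- the two classes are balanced
    intro u
    rw [hcnt'α u, hcnt'β u]
    exact hσ u

/-- The potential function. -/
def pot (c : Sym2 V → Fin 3) : ℕ := ∑ u : V, ∑ δ : Fin 3, (cnt G c u δ) ^ 2

lemma improve (f : V → Bool) (hf : ∀ p q : V, G.Adj p q → f p ≠ f q)
    (c : Sym2 V → Fin 3) (α β : Fin 3) (hαβ : α ≠ β) (v : V)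
    (hgap : cnt G c v β + 2 ≤ cnt G c v α) :
    ∃ c' : Sym2 V → Fin 3, pot G c' < pot G c := by
  obtain ⟨c', hγ, hsum, hdiff⟩ := rebalance G f hf c α β hαβ
  refine ⟨c', ?_⟩
  obtain ⟨γ, hγα, hγβ, huniv⟩ := fin3_cover α β hαβ
  have hpair : ∀ u : V, (cnt G c' u α) ^ 2 + (cnt G c' u β) ^ 2
      ≤ (cnt G c u α) ^ 2 + (cnt G c u β) ^ 2 := by
    intro u
    have h1 : ((cnt G c' u α : ℤ)) ^ 2 + ((cnt G c' u β : ℤ)) ^ 2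
        ≤ ((cnt G c u α : ℤ)) ^ 2 + ((cnt G c u β : ℤ)) ^ 2 := by
      refine sq_le_sq_of_bal ?_ ?_ ?_
      · exact_mod_cast hsum u
      · exact (abs_le.mp (hdiff u)).1
      · exact (abs_le.mp (hdiff u)).2
    exact_mod_cast h1
  have hle : ∀ u ∈ (Finset.univ : Finset V),
      ∑ δ : Fin 3, (cnt G c' u δ) ^ 2 ≤ ∑ δ : Fin 3, (cnt G c u δ) ^ 2 := by
    intro u _
    rw [fin3_sum α β γ hαβ (Ne.symm hγα) (Ne.symm hγβ) huniv,
      fin3_sum α β γ hαβ (Ne.symm hγα) (Ne.symm hγβ) huniv]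
    have h1 := hγ u γ hγα hγβ
    have h2 := hpair u
    rw [h1]
    omega
  have hlt : ∑ δ : Fin 3, (cnt G c' v δ) ^ 2 < ∑ δ : Fin 3, (cnt G c v δ) ^ 2 := by
    rw [fin3_sum α β γ hαβ (Ne.symm hγα) (Ne.symm hγβ) huniv,
      fin3_sum α β γ hαβ (Ne.symm hγα) (Ne.symm hγβ) huniv]
    have h1 := hγ v γ hγα hγβ
    have h2 : ((cnt G c' v α : ℤ)) ^ 2 + ((cnt G c' v β : ℤ)) ^ 2
        < ((cnt G c v α : ℤ)) ^ 2 + ((cnt G c v β : ℤ)) ^ 2 := by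
      refine sq_lt_sq_of_bal ?_ ?_ ?_ ?_
      · exact_mod_cast hsum v
      · exact (abs_le.mp (hdiff v)).1
      · exact (abs_le.mp (hdiff v)).2
      · exact_mod_cast hgap
    have h3 : (cnt G c' v α) ^ 2 + (cnt G c' v β) ^ 2
        < (cnt G c v α) ^ 2 + (cnt G c v β) ^ 2 := by exact_mod_cast h2
    rw [h1]
    omega
  exact Finset.sum_lt_sum hle ⟨v, Finset.mem_univ v, hlt⟩

lemma step (f : V → Bool) (hf : ∀ p q : V, G.Adj p q → f p ≠ f q)
    (hδ : ∀ v : V, 2 ≤ G.degree v) (c : Sym2 V → Fin 3)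
    (hnot : ¬ ∀ (u : V) (δ : Fin 3), 2 * cnt G c u δ ≤ G.degree u) :
    ∃ c₂ : Sym2 V → Fin 3, pot G c₂ < pot G c := by
  push_neg at hnot
  obtain ⟨u, δ, hviol⟩ := hnot
  obtain ⟨β₁, β₂, h1, h2, h3, huniv⟩ := fin3_cover1 δ
  have hsum3 : cnt G c u δ + cnt G c u β₁ + cnt G c u β₂ = G.degree u := by
    rw [← sum_cnt G c u, fin3_sum δ β₁ β₂ h1 h2 h3 huniv]
  have hd2 := hδ u
  by_cases hb : cnt G c u β₁ ≤ cnt G c u β₂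
  · exact improve G f hf c δ β₁ h1 u (by omega)
  · exact improve G f hf c δ β₂ h2 u (by omega)

lemma loop (f : V → Bool) (hf : ∀ p q : V, G.Adj p q → f p ≠ f q)
    (hδ : ∀ v : V, 2 ≤ G.degree v) :
    ∀ (n : ℕ) (c : Sym2 V → Fin 3), pot G c ≤ n →
    ∃ c' : Sym2 V → Fin 3, ∀ (u : V) (δ : Fin 3), 2 * cnt G c' u δ ≤ G.degree u := by
  intro n
  induction n with
  | zero =>
    intro c hn
    by_cases hmaj : ∀ (u : V) (δ : Fin 3), 2 * cnt G c u δ ≤ G.degree u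
    · exact ⟨c, hmaj⟩
    · obtain ⟨c₂, hc₂⟩ := step G f hf hδ c hmaj
      omega
  | succ n ih =>
    intro c hn
    by_cases hmaj : ∀ (u : V) (δ : Fin 3), 2 * cnt G c u δ ≤ G.degree u
    · exact ⟨c, hmaj⟩
    · obtain ⟨c₂, hc₂⟩ := step G f hf hδ c hmaj
      exact ih c₂ (by omega)

end Graph

end MajAux


open SimpleGraph

/-- Majority edge coloring. -/
def IsMajorityEdgeColoring {V : Type*} [Fintype V] [DecidableEq V]
    (G : SimpleGraph V) [DecidableRel G.Adj] {k : ℕ} (c : Sym2 V → Fin k) : Prop :=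
  ∀ u : V, ∀ α : Fin k,
    2 * ((G.neighborFinset u).filter (fun v => c s(u, v) = α)).card ≤ G.degree u

/-- Every finite bipartite graph of minimum degree at least 2 has a majority edge
3-coloring. -/
theorem majority_three_colors_of_bipartite {V : Type*} [Fintype V] [DecidableEq V]
    (G : SimpleGraph V) [DecidableRel G.Adj]
    (hbip : ∃ s : Set V, ∀ u v : V, G.Adj u v → (u ∈ s ∧ v ∉ s) ∨ (u ∉ s ∧ v ∈ s))
    (hδ : ∀ v : V, 2 ≤ G.degree v) :
    ∃ c : Sym2 V → Fin 3, IsMajorityEdgeColoring G c := by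
  classical
  obtain ⟨S, hS⟩ := hbip
  set f : V → Bool := fun v => if v ∈ S then true else false with hfdef
  have hf : ∀ p q : V, G.Adj p q → f p ≠ f q := by
    intro p q h
    rcases hS p q h with ⟨h1, h2⟩ | ⟨h1, h2⟩ <;> simp [hfdef, h1, h2]
  obtain ⟨c, hc⟩ := MajAux.loop G f hf hδ (MajAux.pot G (fun _ => 0)) (fun _ => 0) le_rfl
  refine ⟨c, ?_⟩
  unfold IsMajorityEdgeColoring
  intro u α
  rw [MajAux.cnt_eq G c u α]
  exact hc u α
end

section
/- Every finite simple graph of minimum degree at least 2 has a majority edge coloring with 4 colors. -/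
open Finset

namespace MajAux

variable {W : Type*} [DecidableEq W]

def Proper (s : Finset (Sym2 W)) (c : Sym2 W → Fin 4) : Prop :=
  ∀ f ∈ s, ∀ g ∈ s, f ≠ g → ∀ w : W, w ∈ f → w ∈ g → c f ≠ c g

lemma hardCase (s' : Finset (Sym2 W)) (c : Sym2 W → Fin 4) (hc : Proper s' c)
    (u v : W) (huv : u ≠ v) (he : s(u, v) ∉ s')
    (hdeg : ∀ w : W, ((insert s(u,v) s').filter (fun f => w ∈ f)).card ≤ 3)
    (a b cc dd : Fin 4)
    (hall : ∀ x : Fin 4, x = a ∨ x = b ∨ x = cc ∨ x = dd)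
    (hab : a ≠ b) (hac : a ≠ cc) (had : a ≠ dd) (hbc : b ≠ cc) (hbd : b ≠ dd) (hcd : cc ≠ dd)
    (hu : ∀ f ∈ s', u ∈ f → c f = a ∨ c f = b)
    (hv : ∀ f ∈ s', v ∈ f → c f = cc ∨ c f = dd)
    (k : ℕ) (Lf : ℕ → W) (hk2 : 2 ≤ k) (hkeven : Even k)
    (hL0 : Lf 0 = u) (hLk : Lf k = v)
    (hinj : ∀ p ≤ k, ∀ q ≤ k, Lf p = Lf q → p = q)
    (hedge : ∀ j < k, s(Lf j, Lf (j+1)) ∈ s')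
    (hcol : ∀ j < k, c s(Lf j, Lf (j+1)) = if Even j then a else cc) :
    ∃ c' : Sym2 W → Fin 4, Proper (insert s(u,v) s') c' := by
  classical
  set e : Sym2 W := s(u, v) with he_def
  set g : ℕ → Sym2 W := fun j => s(Lf j, Lf (j+1)) with hg_def
  have hkmod : k % 2 = 0 := Nat.even_iff.mp hkeven
  have hgmem : ∀ (j : ℕ) (w : W), w ∈ g j ↔ w = Lf j ∨ w = Lf (j+1) := by
    intro j w; rw [hg_def]; exact Sym2.mem_iff
  have hginj : ∀ p, p < k → ∀ q, q < k → g p = g q → p = q := by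
    intro p hp q hq hpq
    rw [hg_def] at hpq
    simp only [Sym2.eq_iff] at hpq
    rcases hpq with ⟨h1, h2⟩ | ⟨h1, h2⟩
    · exact hinj p (by omega) q (by omega) h1
    · have e1 := hinj p (by omega) (q+1) (by omega) h1
      have e2 := hinj (p+1) (by omega) q (by omega) h2
      omega
  have hgne : ∀ j, j < k → g j ≠ e := by
    intro j hj hEq
    rw [hg_def, he_def] at hEq
    simp only [Sym2.eq_iff] at hEq
    rcases hEq with ⟨h1, h2⟩ | ⟨h1, h2⟩
    · rw [← hL0] at h1; rw [← hLk] at h2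
      have e1 := hinj j (by omega) 0 (by omega) h1
      have e2 := hinj (j+1) (by omega) k (by omega) h2
      omega
    · rw [← hLk] at h1
      have e1 := hinj j (by omega) k (by omega) h1
      omega
  have hge : ∀ j, j < k → g j ∈ s' := by
    intro j hj; rw [hg_def]; exact hedge j hj
  have hgc : ∀ j, j < k → c (g j) = if Even j then a else cc := by
    intro j hj; rw [hg_def]; exact hcol j hj
  set O : ℕ → Finset (Sym2 W) :=
    fun m => s'.filter (fun f => Lf m ∈ f ∧ ∀ i, i < k → f ≠ g i) with hO_def
  have hOmem : ∀ (m : ℕ) (f : Sym2 W),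
      f ∈ O m ↔ (f ∈ s' ∧ Lf m ∈ f ∧ ∀ i, i < k → f ≠ g i) := by
    intro m f; rw [hO_def]; simp [mem_filter]

  have factO0 : ∀ f ∈ O 0, c f = b := by
    intro f hf
    rw [hOmem] at hf
    obtain ⟨hfs, hfu, hfne⟩ := hf
    rw [hL0] at hfu
    rcases hu f hfs hfu with h | h
    · exfalso
      have h0 : u ∈ g 0 := by rw [hgmem]; left; exact hL0.symm
      have h2 := hc f hfs (g 0) (hge 0 (by omega)) (hfne 0 (by omega)) u hfu h0
      rw [hgc 0 (by omega), if_pos Even.zero] at h2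
      exact h2 h
    · exact h
  have hk1 : k - 1 + 1 = k := by omega
  have hoddk1 : ¬ Even (k-1) := by rw [Nat.even_iff]; omega
  have factOk : ∀ f ∈ O k, c f = dd := by
    intro f hf
    rw [hOmem] at hf
    obtain ⟨hfs, hfv, hfne⟩ := hf
    rw [hLk] at hfv
    rcases hv f hfs hfv with h | h
    · exfalso
      have h0 : v ∈ g (k-1) := by rw [hgmem]; right; rw [hk1]; exact hLk.symm
      have h2 := hc f hfs (g (k-1)) (hge _ (by omega)) (hfne _ (by omega)) v hfv h0
      rw [hgc _ (by omega), if_neg hoddk1] at h2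
      exact h2 h
    · exact h
  have hdeg' : ∀ w : W, (s'.filter (fun f => w ∈ f)).card ≤ 3 := by
    intro w
    calc (s'.filter (fun f => w ∈ f)).card
        ≤ ((insert e s').filter (fun f => w ∈ f)).card :=
          card_le_card (filter_subset_filter _ (subset_insert _ _))
      _ ≤ 3 := hdeg w
  have factCard : ∀ m, 0 < m → m < k → (O m).card ≤ 1 := by
    intro m hm0 hmk
    have hm1 : m - 1 + 1 = m := by omega
    have hgg : g (m-1) ≠ g m := by
      intro hEq
      have := hginj _ (by omega) _ (by omega) hEq; omega
    have hpair : ({g (m-1), g m} : Finset (Sym2 W)).card = 2 := by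
      rw [card_insert_of_notMem (by simpa using hgg), card_singleton]
    have hdisj : Disjoint (O m) {g (m-1), g m} := by
      rw [disjoint_right]
      intro f hf hfO
      rw [hOmem] at hfO
      rcases mem_insert.mp hf with h | h
      · exact hfO.2.2 (m-1) (by omega) h
      · exact hfO.2.2 m (by omega) (mem_singleton.mp h)
    have hsub : O m ∪ {g (m-1), g m} ⊆ s'.filter (fun f => Lf m ∈ f) := by
      intro f hf
      rcases mem_union.mp hf with h | h
      · rw [hOmem] at h; exact mem_filter.mpr ⟨h.1, h.2.1⟩
      · rcases mem_insert.mp h with h | h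
        · subst h
          exact mem_filter.mpr ⟨hge _ (by omega), by rw [hgmem]; right; rw [hm1]⟩
        · rw [mem_singleton.mp h]
          exact mem_filter.mpr ⟨hge _ (by omega), by rw [hgmem]; left; rfl⟩
    have hcards := card_le_card hsub
    rw [card_union_of_disjoint hdisj, hpair] at hcards
    have h3 := hdeg' (Lf m)
    omega
  have factOint : ∀ m, 0 < m → m < k → ∀ f ∈ O m, c f = b ∨ c f = dd := by
    intro m hm0 hmk f hf
    rw [hOmem] at hf
    obtain ⟨hfs, hfm, hfne⟩ := hf
    have hm1 : m - 1 + 1 = m := by omega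
    have hne1 : c f ≠ c (g (m-1)) :=
      hc f hfs _ (hge _ (by omega)) (hfne _ (by omega)) (Lf m) hfm
        (by rw [hgmem]; right; rw [hm1])
    have hne2 : c f ≠ c (g m) :=
      hc f hfs _ (hge _ (by omega)) (hfne _ (by omega)) (Lf m) hfm
        (by rw [hgmem]; left; rfl)
    rw [hgc _ (by omega)] at hne1
    rw [hgc _ (by omega)] at hne2
    have hpar : (Even (m-1) ∧ ¬ Even m) ∨ (¬ Even (m-1) ∧ Even m) := by
      rw [Nat.even_iff, Nat.even_iff]; omega
    have hna : c f ≠ a ∧ c f ≠ cc := by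
      rcases hpar with ⟨h1, h2⟩ | ⟨h1, h2⟩
      · rw [if_pos h1] at hne1; rw [if_neg h2] at hne2; exact ⟨hne1, hne2⟩
      · rw [if_neg h1] at hne1; rw [if_pos h2] at hne2; exact ⟨hne2, hne1⟩
    rcases hall (c f) with h | h | h | h
    · exact absurd h hna.1
    · exact Or.inl h
    · exact absurd h hna.2
    · exact Or.inr h
  have hex : ∃ t, t < k ∧ ∃ x : Fin 4, (x = b ∨ x = dd) ∧
      (∀ f ∈ O t, c f ≠ x) ∧ (∀ f ∈ O (t+1), c f ≠ x) := by
    by_contra hcon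
    push_neg at hcon
    have claim : ∀ j, j ≤ k → (∃ f ∈ O j, c f = (if Even j then b else dd)) ∧
        (j < k → ∀ f ∈ O j, c f ≠ (if Even j then dd else b)) := by
      intro j
      induction j with
      | zero =>
        intro _
        have hneg : ∀ f ∈ O 0, c f ≠ (if Even 0 then dd else b) := by
          intro f hf
          rw [if_pos Even.zero, factO0 f hf]
          exact hbd
        constructor
        · by_contra hno
          push_neg at hno
          obtain ⟨f1, hf1, hc1⟩ := hcon 0 (by omega) dd (Or.inr rfl)
            (by intro f hf; rw [factO0 f hf]; exact hbd)
          obtain ⟨f2, hf2, hc2⟩ := hcon 0 (by omega) b (Or.inl rfl)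
            (by intro f hf hfb; exact hno f hf (by rw [if_pos Even.zero]; exact hfb))
          have hne : f1 ≠ f2 := by
            intro hEq; rw [hEq, hc2] at hc1; exact hbd hc1
          have h2le : 2 ≤ (O 1).card := by
            have hss : ({f1, f2} : Finset (Sym2 W)) ⊆ O 1 := by
              intro z hz
              rcases mem_insert.mp hz with h | h
              · exact h ▸ hf1
              · exact (mem_singleton.mp h) ▸ hf2
            have : ({f1, f2} : Finset (Sym2 W)).card = 2 := by
              rw [card_insert_of_notMem (by simpa using hne), card_singleton]
            rw [← this]
            exact card_le_card hss
          have := factCard 1 (by omega) (by omega)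
          omega
        · intro _; exact hneg
      | succ i ih =>
        intro hik
        have hi := ih (by omega)
        have hpos : ∃ f ∈ O (i+1), c f = (if Even (i+1) then b else dd) := by
          have hflip : (if Even (i+1) then b else dd) = (if Even i then dd else b) := by
            by_cases h : Even i
            · rw [if_pos h, if_neg (by simpa [Nat.even_add_one] using h)]
            · rw [if_neg h, if_pos (by simpa [Nat.even_add_one] using h)]
          rw [hflip]
          refine hcon i (by omega) _ ?_ (hi.2 (by omega))
          by_cases h : Even i
          · rw [if_pos h]; exact Or.inr rfl
          · rw [if_neg h]; exact Or.inl rfl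
        refine ⟨hpos, ?_⟩
        intro hik' f hf hcf
        obtain ⟨f', hf', hcf'⟩ := hpos
        have hne : f ≠ f' := by
          intro hEq
          rw [hEq, hcf'] at hcf
          by_cases h : Even (i+1)
          · rw [if_pos h, if_pos h] at hcf; exact hbd hcf
          · rw [if_neg h, if_neg h] at hcf; exact hbd hcf.symm
        have h2le : 2 ≤ (O (i+1)).card := by
          have hss : ({f, f'} : Finset (Sym2 W)) ⊆ O (i+1) := by
            intro z hz
            rcases mem_insert.mp hz with h | h
            · exact h ▸ hf
            · exact (mem_singleton.mp h) ▸ hf'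
          have hcard2 : ({f, f'} : Finset (Sym2 W)).card = 2 := by
            rw [card_insert_of_notMem (by simpa using hne), card_singleton]
          rw [← hcard2]
          exact card_le_card hss
        have := factCard (i+1) (by omega) hik'
        omega
    obtain ⟨f, hf, hcf⟩ := (claim k le_rfl).1
    rw [if_pos hkeven] at hcf
    exact hbd (((factOk f hf).symm.trans hcf).symm)

  obtain ⟨t, htk, x, hx, hxt, hxt1⟩ := hex
  have hxa : x ≠ a := by
    rcases hx with h | h
    · rw [h]; exact Ne.symm hab
    · rw [h]; exact Ne.symm had
  have hxcc : x ≠ cc := by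
    rcases hx with h | h
    · rw [h]; exact hbc
    · rw [h]; exact Ne.symm hcd
  set pat : ℕ → Fin 4 := fun j =>
    if j = t then x else if j < t then (if Even (j+t) then a else cc)
    else (if Even (j-t) then cc else a) with hpat_def
  set eps : Fin 4 := if Even t then cc else a with heps_def
  set newc : Sym2 W → Fin 4 := fun f =>
    if f = e then eps
    else if h : ∃ j, j < k ∧ f = g j then pat (Classical.choose h) else c f with hnewc_def
  have hnc_e : newc e = eps := by rw [hnewc_def]; simp
  have hnc_g : ∀ j, j < k → newc (g j) = pat j := by
    intro j hj
    rw [hnewc_def]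
    simp only
    rw [if_neg (hgne j hj)]
    have hexj : ∃ i, i < k ∧ g j = g i := ⟨j, hj, rfl⟩
    rw [dif_pos hexj]
    have hspec := Classical.choose_spec hexj
    congr 1
    exact hginj _ hspec.1 _ hj hspec.2.symm
  have hnc_out : ∀ f, f ≠ e → (∀ i, i < k → f ≠ g i) → newc f = c f := by
    intro f h1 h2
    rw [hnewc_def]
    simp only
    rw [if_neg h1, dif_neg]
    rintro ⟨i, hik, hEq⟩
    exact h2 i hik hEq
  have heps_mem : eps = a ∨ eps = cc := by
    rw [heps_def]
    by_cases h : Even t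
    · rw [if_pos h]; right; rfl
    · rw [if_neg h]; left; rfl
  have hpat_t : pat t = x := by rw [hpat_def]; simp
  have hpat_mem : ∀ j, j ≠ t → pat j = a ∨ pat j = cc := by
    intro j hj
    rw [hpat_def]
    simp only
    rw [if_neg hj]
    by_cases h : j < t
    · rw [if_pos h]
      by_cases h2 : Even (j+t)
      · rw [if_pos h2]; left; rfl
      · rw [if_neg h2]; right; rfl
    · rw [if_neg h]
      by_cases h2 : Even (j-t)
      · rw [if_pos h2]; right; rfl
      · rw [if_neg h2]; left; rfl
  have hx_ne_eps : x ≠ eps := by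
    rcases heps_mem with h | h
    · rw [h]; exact hxa
    · rw [h]; exact hxcc
  have hpat_succ : ∀ p, p ≠ t → p + 1 ≠ t → pat p ≠ pat (p+1) := by
    intro p h1 h2
    rw [hpat_def]
    simp only
    rw [if_neg h1, if_neg h2]
    by_cases h : p < t
    · have h3 : p + 1 < t := by omega
      rw [if_pos h, if_pos h3]
      have hp2 : (Even (p+t) ∧ ¬ Even (p+1+t)) ∨ (¬ Even (p+t) ∧ Even (p+1+t)) := by
        rw [Nat.even_iff, Nat.even_iff]; omega
      rcases hp2 with ⟨ha1, ha2⟩ | ⟨ha1, ha2⟩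
      · rw [if_pos ha1, if_neg ha2]; exact hac
      · rw [if_neg ha1, if_pos ha2]; exact Ne.symm hac
    · have h3 : t < p := by omega
      rw [if_neg h, if_neg (by omega : ¬ (p + 1 < t))]
      have hp2 : (Even (p-t) ∧ ¬ Even (p+1-t)) ∨ (¬ Even (p-t) ∧ Even (p+1-t)) := by
        rw [Nat.even_iff, Nat.even_iff]; omega
      rcases hp2 with ⟨ha1, ha2⟩ | ⟨ha1, ha2⟩
      · rw [if_pos ha1, if_neg ha2]; exact Ne.symm hac
      · rw [if_neg ha1, if_pos ha2]; exact hac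
  have hpat_0 : t ≠ 0 → pat 0 ≠ eps := by
    intro ht0
    rw [hpat_def, heps_def]
    simp only
    rw [if_neg (Ne.symm ht0), if_pos (by omega : 0 < t)]
    simp only [Nat.zero_add]
    by_cases h : Even t
    · rw [if_pos h, if_pos h]; exact hac
    · rw [if_neg h, if_neg h]; exact Ne.symm hac
  have hpat_km : t ≠ k - 1 → pat (k-1) ≠ eps := by
    intro htk1
    have h3 : t < k - 1 := by omega
    rw [hpat_def, heps_def]
    simp only
    rw [if_neg (by omega : ¬ (k-1 = t)), if_neg (by omega : ¬ (k-1 < t))]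
    have hp2 : (Even (k-1-t) ∧ ¬ Even t) ∨ (¬ Even (k-1-t) ∧ Even t) := by
      rw [Nat.even_iff, Nat.even_iff]; omega
    rcases hp2 with ⟨h1, h2⟩ | ⟨h1, h2⟩
    · rw [if_pos h1, if_neg h2]; exact Ne.symm hac
    · rw [if_neg h1, if_pos h2]; exact hac
  have hOins : ∀ (m : ℕ) (f : Sym2 W), f ∈ insert e s' → f ≠ e →
      (∀ i, i < k → f ≠ g i) → Lf m ∈ f → f ∈ O m := by
    intro m f hf h1 h2 h3
    rw [hOmem]
    refine ⟨?_, h3, h2⟩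
    rcases mem_insert.mp hf with h | h
    · exact absurd h h1
    · exact h
  have hsafe : ∀ m, m ≤ k → ∀ f ∈ O m,
      c f ≠ a ∧ c f ≠ cc ∧ ((m = t ∨ m = t+1) → c f ≠ x) := by
    intro m hm f hf
    have hxpart : (m = t ∨ m = t+1) → c f ≠ x := by
      rintro (rfl | rfl)
      · exact hxt f hf
      · exact hxt1 f hf
    rcases Nat.eq_zero_or_pos m with rfl | hm0
    · have hb := factO0 f hf
      exact ⟨by rw [hb]; exact Ne.symm hab, by rw [hb]; exact hbc, hxpart⟩
    rcases eq_or_lt_of_le hm with rfl | hmk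
    · have hb := factOk f hf
      exact ⟨by rw [hb]; exact Ne.symm had, by rw [hb]; exact Ne.symm hcd, hxpart⟩
    · rcases factOint m hm0 hmk f hf with h | h
      · exact ⟨by rw [h]; exact Ne.symm hab, by rw [h]; exact hbc, hxpart⟩
      · exact ⟨by rw [h]; exact Ne.symm had, by rw [h]; exact Ne.symm hcd, hxpart⟩
  have hclass : ∀ f ∈ insert e s', f = e ∨ (∃ j, j < k ∧ f = g j) ∨
      (f ≠ e ∧ (∀ i, i < k → f ≠ g i) ∧ f ∈ s') := by
    intro f hf
    by_cases h1 : f = e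
    · exact Or.inl h1
    by_cases h2 : ∃ j, j < k ∧ f = g j
    · exact Or.inr (Or.inl h2)
    · push_neg at h2
      refine Or.inr (Or.inr ⟨h1, fun i hik => h2 i hik, ?_⟩)
      rcases mem_insert.mp hf with h | h
      · exact absurd h h1
      · exact h
  have hvert_g : ∀ j, j < k → ∀ w : W, w ∈ g j → w = Lf j ∨ w = Lf (j+1) :=
    fun j _ w hw => (hgmem j w).mp hw
  have hvert_e : ∀ w : W, w ∈ e → w = Lf 0 ∨ w = Lf k := by
    intro w hw
    rw [he_def] at hw
    rw [hL0, hLk]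
    exact Sym2.mem_iff.mp hw
  -- block: e vs outside
  have blockEO : ∀ f, f ∈ s' → (∀ i, i < k → f ≠ g i) → f ≠ e →
      ∀ w : W, w ∈ e → w ∈ f → newc e ≠ newc f := by
    intro f hfs hfng hfne w hwe hwf
    rw [hnc_e, hnc_out f hfne hfng]
    rcases hvert_e w hwe with rfl | rfl
    · have hfO : f ∈ O 0 := hOins 0 f (mem_insert_of_mem hfs) hfne hfng hwf
      have hs := hsafe 0 (by omega) f hfO
      rcases heps_mem with h | h <;> rw [h]
      · exact fun hq => hs.1 hq.symm
      · exact fun hq => hs.2.1 hq.symm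
    · have hfO : f ∈ O k := hOins k f (mem_insert_of_mem hfs) hfne hfng hwf
      have hs := hsafe k le_rfl f hfO
      rcases heps_mem with h | h <;> rw [h]
      · exact fun hq => hs.1 hq.symm
      · exact fun hq => hs.2.1 hq.symm
  -- block: g j vs outside
  have blockGO : ∀ j, j < k → ∀ f, f ∈ s' → (∀ i, i < k → f ≠ g i) → f ≠ e →
      ∀ w : W, w ∈ g j → w ∈ f → newc (g j) ≠ newc f := by
    intro j hj f hfs hfng hfne w hwg hwf
    rw [hnc_g j hj, hnc_out f hfne hfng]
    rcases hvert_g j hj w hwg with rfl | rfl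
    · have hfO : f ∈ O j := hOins j f (mem_insert_of_mem hfs) hfne hfng hwf
      have hs := hsafe j (by omega) f hfO
      by_cases hjt : j = t
      · subst hjt
        rw [hpat_t]
        exact fun hq => (hs.2.2 (Or.inl rfl)) hq.symm
      · rcases hpat_mem j hjt with h | h <;> rw [h]
        · exact fun hq => hs.1 hq.symm
        · exact fun hq => hs.2.1 hq.symm
    · have hfO : f ∈ O (j+1) := hOins (j+1) f (mem_insert_of_mem hfs) hfne hfng hwf
      have hs := hsafe (j+1) (by omega) f hfO
      by_cases hjt : j = t
      · subst hjt
        rw [hpat_t]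
        exact fun hq => (hs.2.2 (Or.inr rfl)) hq.symm
      · rcases hpat_mem j hjt with h | h <;> rw [h]
        · exact fun hq => hs.1 hq.symm
        · exact fun hq => hs.2.1 hq.symm
  -- block: e vs g j
  have blockEG : ∀ j, j < k → ∀ w : W, w ∈ e → w ∈ g j → newc e ≠ newc (g j) := by
    intro j hj w hwe hwg
    rw [hnc_e, hnc_g j hj]
    rcases hvert_e w hwe with rfl | rfl
    · rcases hvert_g j hj _ hwg with h | h
      · have hj0 : j = 0 := (hinj 0 (by omega) j (by omega) h).symm
        subst hj0
        by_cases ht0 : t = 0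
        · rw [← ht0, hpat_t]
          exact fun hq => hx_ne_eps hq.symm
        · exact fun hq => (hpat_0 ht0) hq.symm
      · exfalso
        have := hinj 0 (by omega) (j+1) (by omega) h
        omega
    · rcases hvert_g j hj _ hwg with h | h
      · exfalso
        have := hinj k le_rfl j (by omega) h
        omega
      · have hjk : j = k - 1 := by
          have := hinj k le_rfl (j+1) (by omega) h
          omega
        subst hjk
        by_cases htk1 : t = k - 1
        · rw [← htk1, hpat_t]
          exact fun hq => hx_ne_eps hq.symm
        · exact fun hq => (hpat_km htk1) hq.symm
  -- block: g p vs g q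
  have blockGG : ∀ p, p < k → ∀ q, q < k → p ≠ q →
      ∀ w : W, w ∈ g p → w ∈ g q → newc (g p) ≠ newc (g q) := by
    intro p hp q hq hpq w hwp hwq
    have key : ∀ r, r < k → r + 1 < k → newc (g r) ≠ newc (g (r+1)) := by
      intro r h1 h2
      rw [hnc_g r h1, hnc_g (r+1) h2]
      by_cases hrt : r = t
      · subst hrt
        rw [hpat_t]
        rcases hpat_mem (r+1) (by omega) with h | h <;> rw [h]
        · exact hxa
        · exact hxcc
      · by_cases hrt1 : r + 1 = t
        · rw [hrt1, hpat_t]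
          rcases hpat_mem r hrt with h | h <;> rw [h]
          · exact Ne.symm hxa
          · exact Ne.symm hxcc
        · exact hpat_succ r hrt hrt1
    have hm : q = p + 1 ∨ p = q + 1 := by
      rcases hvert_g p hp w hwp with h1 | h1 <;> rcases hvert_g q hq w hwq with h2 | h2
      · exact absurd (hinj p (by omega) q (by omega) (h1.symm.trans h2)) hpq
      · have := hinj p (by omega) (q+1) (by omega) (h1.symm.trans h2); omega
      · have := hinj (p+1) (by omega) q (by omega) (h1.symm.trans h2); omega
      · have := hinj (p+1) (by omega) (q+1) (by omega) (h1.symm.trans h2)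
        exact absurd (by omega : p = q) hpq
    rcases hm with rfl | rfl
    · exact key p hp hq
    · exact fun hq2 => (key q hq hp) hq2.symm
  refine ⟨newc, ?_⟩
  intro f1 hf1 f2 hf2 hne12 w hw1 hw2
  rcases hclass f1 hf1 with rfl | ⟨p, hp, rfl⟩ | ⟨h1a, h1b, h1c⟩ <;>
    rcases hclass f2 hf2 with h2 | ⟨q, hq, h2⟩ | ⟨h2a, h2b, h2c⟩
  · exact absurd h2.symm hne12
  · subst h2; exact blockEG q hq w hw1 hw2
  · exact blockEO f2 h2c h2b h2a w hw1 hw2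
  · subst h2; exact fun hq2 => (blockEG p hp w hw2 hw1) hq2.symm
  · subst h2
    refine blockGG p hp q hq ?_ w hw1 hw2
    intro hEq
    exact hne12 (by rw [hEq])
  · exact blockGO p hp f2 h2c h2b h2a w hw1 hw2
  · subst h2; exact fun hq2 => (blockEO f1 h1c h1b h1a w hw2 hw1) hq2.symm
  · subst h2; exact fun hq2 => (blockGO q hq f1 h1c h1b h1a w hw2 hw1) hq2.symm
  · rw [hnc_out f1 h1a h1b, hnc_out f2 h2a h2b]
    exact hc f1 h1c f2 h2c hne12 w hw1 hw2



lemma lemA : ∀ (n : ℕ) (s : Finset (Sym2 W)), s.card = n →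
    (∀ f ∈ s, ¬ f.IsDiag) →
    (∀ w : W, (s.filter (fun f => w ∈ f)).card ≤ 3) →
    ∃ c : Sym2 W → Fin 4, Proper s c := by
  intro n
  induction n with
  | zero =>
    intro s hcard _ _
    refine ⟨fun _ => 0, ?_⟩
    intro f hf
    rw [Finset.card_eq_zero.mp hcard] at hf
    exact absurd hf (notMem_empty f)
  | succ n ih =>
    intro s hcard hdiag hdeg
    classical
    have hne : s.Nonempty := by rw [← card_pos, hcard]; omega
    obtain ⟨e, heS⟩ := hne
    revert heS
    induction e using Sym2.ind with
    | _ u v =>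
    intro heS
    have huv : u ≠ v := fun h => (hdiag _ heS) (Sym2.mk_isDiag_iff.mpr h)
    have hrep : ∀ f : Sym2 W, ∃ y z : W, f = s(y, z) :=
      fun f => Sym2.ind (fun y z => ⟨y, z, rfl⟩) f
    set s' := s.erase s(u,v) with hs'_def
    have hs'card : s'.card = n := by
      rw [hs'_def, card_erase_of_mem heS, hcard]
      omega
    obtain ⟨c, hc⟩ := ih s' hs'card
      (fun f hf => hdiag f (erase_subset _ _ hf))
      (fun w => le_trans (card_le_card (filter_subset_filter _ (erase_subset _ _))) (hdeg w))
    have hins : insert s(u,v) s' = s := insert_erase heS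
    have heNot : s(u,v) ∉ s' := notMem_erase _ _
    have hdeg2 : ∀ w : W, ((insert s(u,v) s').filter (fun f => w ∈ f)).card ≤ 3 := by
      intro w; rw [hins]; exact hdeg w
    set incU := s'.filter (fun f => u ∈ f) with hincU_def
    set incV := s'.filter (fun f => v ∈ f) with hincV_def
    set usedU := incU.image c with husedU_def
    set usedV := incV.image c with husedV_def
    have hinc2 : ∀ (y : W), y ∈ s(u,v) → (s'.filter (fun f => y ∈ f)).card ≤ 2 := by
      intro y hy
      have hsub : s'.filter (fun f => y ∈ f) ⊆ (s.filter (fun f => y ∈ f)).erase s(u,v) := by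
        intro f hf
        rw [mem_filter] at hf
        rw [mem_erase]
        exact ⟨ne_of_mem_erase hf.1, mem_filter.mpr ⟨mem_of_mem_erase hf.1, hf.2⟩⟩
      have hm : s(u,v) ∈ s.filter (fun f => y ∈ f) := mem_filter.mpr ⟨heS, hy⟩
      calc (s'.filter (fun f => y ∈ f)).card
          ≤ ((s.filter (fun f => y ∈ f)).erase s(u,v)).card := card_le_card hsub
        _ = (s.filter (fun f => y ∈ f)).card - 1 := card_erase_of_mem hm
        _ ≤ 2 := by have := hdeg y; omega
    have hincU2 : incU.card ≤ 2 := hinc2 u (Sym2.mem_mk_left u v)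
    have hincV2 : incV.card ≤ 2 := hinc2 v (Sym2.mem_mk_right u v)
    have husedU2 : usedU.card ≤ 2 := le_trans card_image_le hincU2
    have husedV2 : usedV.card ≤ 2 := le_trans card_image_le hincV2
    have hupd_ne : ∀ (α : Fin 4) (f : Sym2 W), f ≠ s(u,v) →
        Function.update c s(u,v) α f = c f := fun α f h => Function.update_of_ne h _ _
    by_cases hcase : usedU ∪ usedV = Finset.univ
    · -- both endpoints saturated
      have huniv4 : (usedU ∪ usedV).card = 4 := by
        rw [hcase, card_univ, Fintype.card_fin]
      have hUV := Finset.card_union_add_card_inter usedU usedV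
      have h22 : usedU.card = 2 ∧ usedV.card = 2 ∧ (usedU ∩ usedV).card = 0 := by
        omega
      obtain ⟨a, b, hab, hUeq⟩ := Finset.card_eq_two.mp h22.1
      obtain ⟨cc, dd, hcd, hVeq⟩ := Finset.card_eq_two.mp h22.2.1
      have hdisjUV : usedU ∩ usedV = ∅ := card_eq_zero.mp h22.2.2
      have hcross : ∀ y ∈ usedU, ∀ z ∈ usedV, y ≠ z := by
        intro y hy z hz hEq
        subst hEq
        have : y ∈ usedU ∩ usedV := mem_inter.mpr ⟨hy, hz⟩
        rw [hdisjUV] at this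
        exact absurd this (notMem_empty y)
      have haU : a ∈ usedU := by rw [hUeq]; exact mem_insert_self _ _
      have hbU : b ∈ usedU := by rw [hUeq]; exact mem_insert_of_mem (mem_singleton_self _)
      have hccV : cc ∈ usedV := by rw [hVeq]; exact mem_insert_self _ _
      have hddV : dd ∈ usedV := by rw [hVeq]; exact mem_insert_of_mem (mem_singleton_self _)
      have hac : a ≠ cc := hcross a haU cc hccV
      have had : a ≠ dd := hcross a haU dd hddV
      have hbc : b ≠ cc := hcross b hbU cc hccV
      have hbd : b ≠ dd := hcross b hbU dd hddV
      have hall : ∀ y : Fin 4, y = a ∨ y = b ∨ y = cc ∨ y = dd := by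
        intro y
        have hy : y ∈ usedU ∪ usedV := by rw [hcase]; exact mem_univ y
        rcases mem_union.mp hy with h | h
        · rw [hUeq] at h
          rcases mem_insert.mp h with h | h
          · exact Or.inl h
          · exact Or.inr (Or.inl (mem_singleton.mp h))
        · rw [hVeq] at h
          rcases mem_insert.mp h with h | h
          · exact Or.inr (Or.inr (Or.inl h))
          · exact Or.inr (Or.inr (Or.inr (mem_singleton.mp h)))
      have huPoint : ∀ f ∈ s', u ∈ f → c f = a ∨ c f = b := by
        intro f hf hu2
        have : c f ∈ usedU := mem_image_of_mem c (mem_filter.mpr ⟨hf, hu2⟩)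
        rw [hUeq] at this
        rcases mem_insert.mp this with h | h
        · exact Or.inl h
        · exact Or.inr (mem_singleton.mp h)
      have hvPoint : ∀ f ∈ s', v ∈ f → c f = cc ∨ c f = dd := by
        intro f hf hv2
        have : c f ∈ usedV := mem_image_of_mem c (mem_filter.mpr ⟨hf, hv2⟩)
        rw [hVeq] at this
        rcases mem_insert.mp this with h | h
        · exact Or.inl h
        · exact Or.inr (mem_singleton.mp h)
      set K : SimpleGraph W := {
        Adj := fun y z => y ≠ z ∧ s(y,z) ∈ s' ∧ (c s(y,z) = a ∨ c s(y,z) = cc)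
        symm := by
          constructor
          intro y z h
          obtain ⟨h1, h2, h3⟩ := h
          refine ⟨h1.symm, ?_, ?_⟩ <;> rw [Sym2.eq_swap] <;> assumption
        loopless := ⟨fun y h => h.1 rfl⟩ } with hK_def
      have hKmem : ∀ f ∈ s', (c f = a ∨ c f = cc) → ∀ y ∈ f, ∀ z ∈ f,
          K.Reachable u y → K.Reachable u z := by
        intro f hf hcf y hy z hz hry
        obtain ⟨y', z', rfl⟩ := hrep f
        have hyz' : y' ≠ z' := fun h => (hdiag _ (erase_subset _ _ hf)) (Sym2.mk_isDiag_iff.mpr h)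
        have hadj : K.Adj y' z' := ⟨hyz', hf, hcf⟩
        rcases Sym2.mem_iff.mp hy with rfl | rfl <;> rcases Sym2.mem_iff.mp hz with rfl | rfl
        · exact hry
        · exact hry.trans hadj.reachable
        · exact hry.trans hadj.symm.reachable
        · exact hry
      by_cases hreach : K.Reachable u v
      · -- hard case: extract a path
        obtain ⟨p0⟩ := hreach
        set P := p0.toPath with hP_def
        set L := P.1.support with hL_def
        have hLnd : L.Nodup := P.2.support_nodup
        have hLne : L ≠ [] := SimpleGraph.Walk.support_ne_nil _
        set k := L.length - 1 with hk_def
        have hlen : L.length = k + 1 := by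
          have : 0 < L.length := List.length_pos_iff.mpr hLne
          omega
        set Lf : ℕ → W := fun j => L.getD j u with hLf_def
        have hget : ∀ j (hj : j < L.length), Lf j = L.get ⟨j, hj⟩ := by
          intro j hj; rw [hLf_def]; exact List.getD_eq_getElem L u hj
        have hL0 : Lf 0 = u := by
          rw [hLf_def]
          show L.getD 0 u = u
          rw [hL_def, SimpleGraph.Walk.support_eq_cons]
          rfl
        have hLk : Lf k = v := by
          have h1 : L.getLast hLne = v := SimpleGraph.Walk.getLast_support P.1
          rw [List.getLast_eq_getElem] at h1
          rw [hget k (by omega)]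
          have h2 : (⟨k, by omega⟩ : Fin L.length) = ⟨L.length - 1, by omega⟩ :=
            Fin.mk_eq_mk.mpr (by omega)
          rw [h2]
          exact h1
        have hinjL : ∀ p ≤ k, ∀ q ≤ k, Lf p = Lf q → p = q := by
          intro p hp q hq hpq
          rw [hget p (by omega), hget q (by omega)] at hpq
          have := (List.Nodup.get_inj_iff hLnd).mp hpq
          simpa using this
        have hchain : List.IsChain K.Adj L := P.1.isChain_adj_support
        have hadjL : ∀ j, j < k → K.Adj (Lf j) (Lf (j+1)) := by
          intro j hj
          rw [hget j (by omega), hget (j+1) (by omega)]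
          exact List.isChain_iff_getElem.mp hchain j (by omega)
        have hedgeL : ∀ j < k, s(Lf j, Lf (j+1)) ∈ s' := fun j hj => (hadjL j hj).2.1
        have hcolL : ∀ j < k, c s(Lf j, Lf (j+1)) = if Even j then a else cc := by
          intro j
          induction j with
          | zero =>
            intro hj
            have h := hadjL 0 hj
            rcases h.2.2 with hca | hcc
            · rw [if_pos Even.zero]; exact hca
            · exfalso
              have humem : u ∈ s(Lf 0, Lf 1) := by rw [hL0]; exact Sym2.mem_mk_left _ _
              rcases huPoint _ h.2.1 humem with h2 | h2 <;> rw [hcc] at h2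
              · exact hac h2.symm
              · exact hbc h2.symm
          | succ i ihc =>
            intro hj
            have hprev := ihc (by omega)
            have hcur := hadjL (i+1) hj
            have hprevmem := hedgeL i (by omega)
            have hne_edges : s(Lf i, Lf (i+1)) ≠ s(Lf (i+1), Lf (i+2)) := by
              intro hEq
              simp only [Sym2.eq_iff] at hEq
              rcases hEq with ⟨h1, h2⟩ | ⟨h1, h2⟩
              · have := hinjL i (by omega) (i+1) (by omega) h1; omega
              · have := hinjL i (by omega) (i+2) (by omega) h1; omega
            have hshare := hc _ hprevmem _ hcur.2.1 hne_edges (Lf (i+1))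
              (Sym2.mem_mk_right _ _) (Sym2.mem_mk_left _ _)
            rw [hprev] at hshare
            have hpar : ¬ Even (i+1) ↔ Even i := by
              rw [Nat.even_add_one, not_not]
            by_cases hev : Even i
            · rw [if_pos hev] at hshare
              rw [if_neg (by rw [Nat.even_add_one]; exact fun h => h hev)]
              rcases hcur.2.2 with h2 | h2
              · exact absurd h2.symm hshare
              · exact h2
            · rw [if_neg hev] at hshare
              rw [if_pos ((Nat.even_add_one).mpr hev)]
              rcases hcur.2.2 with h2 | h2
              · exact h2
              · exact absurd h2.symm hshare
        have hkne0 : k ≠ 0 := by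
          intro h
          apply huv
          rw [← hL0, ← hLk, h]
        have hkne1 : k ≠ 1 := by
          intro h
          have h0 := hedgeL 0 (by omega)
          have h1 : Lf (0+1) = v := by rw [(by omega : 0+1 = k), hLk]
          rw [hL0, h1] at h0
          exact heNot h0
        have hk2 : 2 ≤ k := by omega
        have hkeven : Even k := by
          by_contra hodd
          have h1 : Even (k-1) := by
            rw [Nat.even_iff] at hodd ⊢
            omega
          have hcl := hcolL (k-1) (by omega)
          rw [if_pos h1] at hcl
          have hk1' : k - 1 + 1 = k := by omega
          have hvmem : v ∈ s(Lf (k-1), Lf (k-1+1)) := by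
            rw [hk1', hLk]
            exact Sym2.mem_mk_right _ _
          rcases hvPoint _ (hedgeL (k-1) (by omega)) hvmem with h | h <;> rw [hcl] at h
          · exact hac h
          · exact had h
        obtain ⟨c', hc'⟩ := hardCase s' c hc u v huv heNot hdeg2 a b cc dd hall hab hac had
          hbc hbd hcd huPoint hvPoint k Lf hk2 hkeven hL0 hLk hinjL hedgeL hcolL
        exact ⟨c', by rw [← hins]; exact hc'⟩
      · set sw : Fin 4 → Fin 4 := fun y => if y = a then cc else if y = cc then a else y with hsw_def
        have hswa : sw a = cc := by rw [hsw_def]; simp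
        have hswcc : sw cc = a := by
          rw [hsw_def]
          show (if cc = a then cc else if cc = cc then a else cc) = a
          rw [if_neg (Ne.symm hac), if_pos rfl]
        have hswo : ∀ y, y ≠ a → y ≠ cc → sw y = y := by
          intro y h1 h2
          rw [hsw_def]
          show (if y = a then cc else if y = cc then a else y) = y
          rw [if_neg h1, if_neg h2]
        set cond : Sym2 W → Prop :=
          fun f => f ∈ s' ∧ (c f = a ∨ c f = cc) ∧ ∃ y ∈ f, K.Reachable u y with hcond_def
        set c2 : Sym2 W → Fin 4 := fun f => if cond f then sw (c f) else c f with hc2_def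
        have hcond_all : ∀ f, cond f → ∀ y ∈ f, K.Reachable u y := by
          intro f hf y hy
          obtain ⟨hf1, hf2, z, hz, hrz⟩ := hf
          exact hKmem f hf1 hf2 z hz y hy hrz
        have hc2_ne : ∀ f, ¬ cond f → c2 f = c f := by
          intro f hf
          simp only [hc2_def]
          rw [if_neg hf]
        have hc2_pos : ∀ f, cond f → c2 f = sw (c f) := by
          intro f hf
          simp only [hc2_def]
          rw [if_pos hf]
        have hproper2 : Proper s' c2 := by
          intro f1 hf1 f2 hf2 hne12 w hw1 hw2
          by_cases h1 : cond f1 <;> by_cases h2 : cond f2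
          · rw [hc2_pos f1 h1, hc2_pos f2 h2]
            intro hEq
            apply hc f1 hf1 f2 hf2 hne12 w hw1 hw2
            have hinv : ∀ y, sw (sw y) = y := by
              intro y
              by_cases ha : y = a
              · rw [ha, hswa, hswcc]
              · by_cases hcc : y = cc
                · rw [hcc, hswcc, hswa]
                · rw [hswo y ha hcc, hswo y ha hcc]
            have hq := congrArg sw hEq
            rw [hinv, hinv] at hq
            exact hq
          · rw [hc2_pos f1 h1, hc2_ne f2 h2]
            have hcf2 : c f2 ≠ a ∧ c f2 ≠ cc := by
              constructor <;> intro hEq <;> apply h2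
              · exact ⟨hf2, Or.inl hEq, w, hw2, hcond_all f1 h1 w hw1⟩
              · exact ⟨hf2, Or.inr hEq, w, hw2, hcond_all f1 h1 w hw1⟩
            rcases h1.2.1 with h | h <;> rw [h]
            · rw [hswa]; exact fun hq => hcf2.2 hq.symm
            · rw [hswcc]; exact fun hq => hcf2.1 hq.symm
          · rw [hc2_ne f1 h1, hc2_pos f2 h2]
            have hcf1 : c f1 ≠ a ∧ c f1 ≠ cc := by
              constructor <;> intro hEq <;> apply h1
              · exact ⟨hf1, Or.inl hEq, w, hw1, hcond_all f2 h2 w hw2⟩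
              · exact ⟨hf1, Or.inr hEq, w, hw1, hcond_all f2 h2 w hw2⟩
            rcases h2.2.1 with h | h <;> rw [h]
            · rw [hswa]; exact hcf1.2
            · rw [hswcc]; exact hcf1.1
          · rw [hc2_ne f1 h1, hc2_ne f2 h2]
            exact hc f1 hf1 f2 hf2 hne12 w hw1 hw2
        have hU2 : ∀ f ∈ s', u ∈ f → c2 f ≠ a := by
          intro f hf hu2
          by_cases hcf : cond f
          · rw [hc2_pos f hcf]
            rcases hcf.2.1 with h | h
            · rw [h, hswa]; exact Ne.symm hac
            · exfalso
              rcases huPoint f hf hu2 with h2 | h2 <;> rw [h] at h2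
              · exact hac h2.symm
              · exact hbc h2.symm
          · rw [hc2_ne f hcf]
            intro hEq
            exact hcf ⟨hf, Or.inl hEq, u, hu2, SimpleGraph.Reachable.refl u⟩
        have hV2 : ∀ f ∈ s', v ∈ f → c2 f ≠ a := by
          intro f hf hv2
          by_cases hcf : cond f
          · exact absurd (hcond_all f hcf v hv2) hreach
          · rw [hc2_ne f hcf]
            rcases hvPoint f hf hv2 with h | h <;> rw [h]
            · exact Ne.symm hac
            · exact Ne.symm had
        refine ⟨Function.update c2 s(u,v) a, ?_⟩
        rw [← hins]
        have hupd2 : ∀ f : Sym2 W, f ≠ s(u,v) → Function.update c2 s(u,v) a f = c2 f :=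
          fun f h => Function.update_of_ne h _ _
        intro f1 hf1 f2 hf2 hne12 w hw1 hw2
        by_cases h1 : f1 = s(u,v) <;> by_cases h2 : f2 = s(u,v)
        · exact absurd (h1.trans h2.symm) hne12
        · subst h1
          have hf2' : f2 ∈ s' := by
            rcases mem_insert.mp hf2 with h | h
            · exact absurd h h2
            · exact h
          rw [Function.update_self, hupd2 f2 h2]
          rcases Sym2.mem_iff.mp hw1 with rfl | rfl
          · exact fun hq => (hU2 f2 hf2' hw2) hq.symm
          · exact fun hq => (hV2 f2 hf2' hw2) hq.symm
        · subst h2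
          have hf1' : f1 ∈ s' := by
            rcases mem_insert.mp hf1 with h | h
            · exact absurd h h1
            · exact h
          rw [Function.update_self, hupd2 f1 h1]
          rcases Sym2.mem_iff.mp hw2 with rfl | rfl
          · exact hU2 f1 hf1' hw1
          · exact hV2 f1 hf1' hw1
        · have hf1' : f1 ∈ s' := by
            rcases mem_insert.mp hf1 with h | h
            · exact absurd h h1
            · exact h
          have hf2' : f2 ∈ s' := by
            rcases mem_insert.mp hf2 with h | h
            · exact absurd h h2
            · exact h
          rw [hupd2 f1 h1, hupd2 f2 h2]
          exact hproper2 f1 hf1' f2 hf2' hne12 w hw1 hw2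

    · -- easy case: free color
      have hαex : ∃ α : Fin 4, α ∉ usedU ∪ usedV := by
        by_contra hno
        push_neg at hno
        exact hcase (eq_univ_iff_forall.mpr hno)
      obtain ⟨α, hα⟩ := hαex
      refine ⟨Function.update c s(u,v) α, ?_⟩
      rw [← hins]
      intro f1 hf1 f2 hf2 hne12 w hw1 hw2
      by_cases h1 : f1 = s(u,v) <;> by_cases h2 : f2 = s(u,v)
      · exact absurd (h1.trans h2.symm) hne12
      · subst h1
        have hf2' : f2 ∈ s' := by
          rcases mem_insert.mp hf2 with h | h
          · exact absurd h h2
          · exact h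
        rw [Function.update_self, hupd_ne α f2 h2]
        rcases Sym2.mem_iff.mp hw1 with rfl | rfl
        · have : c f2 ∈ usedU := mem_image_of_mem c (mem_filter.mpr ⟨hf2', hw2⟩)
          exact fun hq => hα (mem_union_left _ (hq ▸ this))
        · have : c f2 ∈ usedV := mem_image_of_mem c (mem_filter.mpr ⟨hf2', hw2⟩)
          exact fun hq => hα (mem_union_right _ (hq ▸ this))
      · subst h2
        have hf1' : f1 ∈ s' := by
          rcases mem_insert.mp hf1 with h | h
          · exact absurd h h1
          · exact h
        rw [Function.update_self, hupd_ne α f1 h1]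
        rcases Sym2.mem_iff.mp hw2 with rfl | rfl
        · have : c f1 ∈ usedU := mem_image_of_mem c (mem_filter.mpr ⟨hf1', hw1⟩)
          exact fun hq => hα (mem_union_left _ (hq ▸ this))
        · have : c f1 ∈ usedV := mem_image_of_mem c (mem_filter.mpr ⟨hf1', hw1⟩)
          exact fun hq => hα (mem_union_right _ (hq ▸ this))
      · have hf1' : f1 ∈ s' := by
          rcases mem_insert.mp hf1 with h | h
          · exact absurd h h1
          · exact h
        have hf2' : f2 ∈ s' := by
          rcases mem_insert.mp hf2 with h | h
          · exact absurd h h2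
          · exact h
        rw [hupd_ne α f1 h1, hupd_ne α f2 h2]
        exact hc f1 hf1' f2 hf2' hne12 w hw1 hw2

end MajAux

open SimpleGraph

/-- Every finite graph of minimum degree at least 2 has a majority edge 4-coloring. -/
theorem majority_four_colors {V : Type*} [Fintype V] [DecidableEq V]
    (G : SimpleGraph V) [DecidableRel G.Adj] (hδ : ∀ v : V, 2 ≤ G.degree v) :
    ∃ c : Sym2 V → Fin 4, IsMajorityEdgeColoring G c := by
  classical
  have hrep : ∀ f : Sym2 V, ∃ x y, f = s(x,y) := fun f => Sym2.ind (fun x y => ⟨x, y, rfl⟩) f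
  set idx : V → V → ℕ := fun x y =>
    if h : y ∈ G.neighborFinset x then (((G.neighborFinset x).equivFin ⟨y, h⟩ : Fin _) : ℕ)
    else 0 with hidx_def
  have hidx_lt : ∀ x y, y ∈ G.neighborFinset x → idx x y < G.degree x := by
    intro x y h
    simp only [hidx_def]
    rw [dif_pos h]
    have h2 := ((G.neighborFinset x).equivFin ⟨y, h⟩).isLt
    simpa [SimpleGraph.card_neighborFinset_eq_degree] using h2
  have hidx_inj : ∀ x y1, y1 ∈ G.neighborFinset x → ∀ y2, y2 ∈ G.neighborFinset x →
      idx x y1 = idx x y2 → y1 = y2 := by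
    intro x y1 h1 y2 h2 hEq
    simp only [hidx_def] at hEq
    rw [dif_pos h1, dif_pos h2] at hEq
    have h3 := (G.neighborFinset x).equivFin.injective (Fin.val_injective hEq)
    exact Subtype.mk_eq_mk.mp h3
  set part : V → V → ℕ := fun x y => min (idx x y / 2) (G.degree x / 2 - 1) with hpart_def
  set emap : Sym2 V → Sym2 (V × ℕ) :=
    Sym2.lift ⟨fun x y => s((x, part x y), (y, part y x)), fun x y => Sym2.eq_swap⟩
    with hemap_def
  have hemapmk : ∀ x y, emap s(x,y) = s((x, part x y), (y, part y x)) := by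
    intro x y; rw [hemap_def]; rfl
  set s : Finset (Sym2 (V × ℕ)) := G.edgeFinset.image emap with hs_def
  have hmemS : ∀ x y, G.Adj x y → emap s(x,y) ∈ s := by
    intro x y hxy
    rw [hs_def]
    exact mem_image_of_mem emap (SimpleGraph.mem_edgeFinset.mpr hxy)
  have hdiagS : ∀ f ∈ s, ¬ f.IsDiag := by
    intro f hf
    rw [hs_def] at hf
    obtain ⟨e', he', rfl⟩ := Finset.mem_image.mp hf
    obtain ⟨x, y, rfl⟩ := hrep e'
    have hxy : G.Adj x y := G.mem_edgeSet.mp (SimpleGraph.mem_edgeFinset.mp he')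
    rw [hemapmk, Sym2.mk_isDiag_iff]
    intro hEq
    exact G.ne_of_adj hxy (congrArg Prod.fst hEq)
  have hdeg3 : ∀ w : V × ℕ, (s.filter (fun f => w ∈ f)).card ≤ 3 := by
    rintro ⟨u, i⟩
    have hsub : s.filter (fun f => (u, i) ∈ f) ⊆
        ((G.neighborFinset u).filter (fun z => part u z = i)).image (fun z => emap s(u, z)) := by
      intro f hf
      obtain ⟨hfs, hfm⟩ := Finset.mem_filter.mp hf
      rw [hs_def] at hfs
      obtain ⟨e', he', rfl⟩ := Finset.mem_image.mp hfs
      obtain ⟨x, y, rfl⟩ := hrep e'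
      have hxy : G.Adj x y := G.mem_edgeSet.mp (SimpleGraph.mem_edgeFinset.mp he')
      rw [hemapmk] at hfm ⊢
      rcases Sym2.mem_iff.mp hfm with h | h
      · have hux : u = x := congrArg Prod.fst h
        subst hux
        have hiy : part u y = i := (congrArg Prod.snd h).symm
        refine Finset.mem_image.mpr ⟨y, ?_, ?_⟩
        · exact Finset.mem_filter.mpr ⟨(G.mem_neighborFinset u y).mpr hxy, hiy⟩
        · rw [hemapmk]
      · have huy : u = y := congrArg Prod.fst h
        subst huy
        have hix : part u x = i := (congrArg Prod.snd h).symm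
        refine Finset.mem_image.mpr ⟨x, ?_, ?_⟩
        · exact Finset.mem_filter.mpr ⟨(G.mem_neighborFinset u x).mpr hxy.symm, hix⟩
        · rw [hemapmk]
          rw [Sym2.eq_swap]
    have hfib : ((G.neighborFinset u).filter (fun z => part u z = i)).card ≤ 3 := by
      have himg : ((G.neighborFinset u).filter (fun z => part u z = i)).image (idx u) ⊆
          ({2*i, 2*i+1, 2*i+2} : Finset ℕ) := by
        intro m hm
        obtain ⟨z, hz, rfl⟩ := Finset.mem_image.mp hm
        obtain ⟨hzN, hzp⟩ := Finset.mem_filter.mp hz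
        have hq := hidx_lt u z hzN
        have hd2 := hδ u
        rw [hpart_def] at hzp
        simp only [Finset.mem_insert, Finset.mem_singleton]
        have hzp' : (if idx u z / 2 ≤ G.degree u / 2 - 1 then idx u z / 2
            else G.degree u / 2 - 1) = i := by rw [← Nat.min_def]; exact hzp
        split_ifs at hzp' <;> omega
      have hinj2 : Set.InjOn (idx u) ((G.neighborFinset u).filter (fun z => part u z = i)) := by
        intro z1 hz1 z2 hz2 hEq
        exact hidx_inj u z1 (Finset.mem_of_mem_filter _ hz1) z2 (Finset.mem_of_mem_filter _ hz2) hEq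
      calc ((G.neighborFinset u).filter (fun z => part u z = i)).card
          = (((G.neighborFinset u).filter (fun z => part u z = i)).image (idx u)).card :=
            (Finset.card_image_of_injOn hinj2).symm
        _ ≤ ({2*i, 2*i+1, 2*i+2} : Finset ℕ).card := Finset.card_le_card himg
        _ ≤ 3 := by
            apply le_trans (Finset.card_insert_le _ _)
            have h2 : ({2*i+1, 2*i+2} : Finset ℕ).card ≤ 2 := by
              apply le_trans (Finset.card_insert_le _ _)
              simp
            omega
    calc (s.filter (fun f => (u, i) ∈ f)).card
        ≤ (((G.neighborFinset u).filter (fun z => part u z = i)).image (fun z => emap s(u, z))).card :=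
          Finset.card_le_card hsub
      _ ≤ ((G.neighborFinset u).filter (fun z => part u z = i)).card := Finset.card_image_le
      _ ≤ 3 := hfib
  obtain ⟨cH, hcH⟩ := MajAux.lemA s.card s rfl hdiagS hdeg3
  refine ⟨fun f => cH (emap f), ?_⟩
  intro u α
  have hd2 := hδ u
  set T := (G.neighborFinset u).filter (fun z => cH (emap s(u, z)) = α) with hT_def
  have hTcard : T.card ≤ G.degree u / 2 := by
    have hmaps : ∀ z ∈ T, part u z ∈ Finset.range (G.degree u / 2) := by
      intro z hz
      rw [Finset.mem_range, hpart_def]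
      have : G.degree u / 2 - 1 < G.degree u / 2 := by omega
      exact lt_of_le_of_lt (min_le_right _ _) this
    have hinjT : Set.InjOn (part u) T := by
      intro z1 hz1 z2 hz2 hEq
      by_contra hne
      obtain ⟨hz1N, hz1c⟩ := Finset.mem_filter.mp hz1
      obtain ⟨hz2N, hz2c⟩ := Finset.mem_filter.mp hz2
      have hadj1 : G.Adj u z1 := (G.mem_neighborFinset u z1).mp hz1N
      have hadj2 : G.Adj u z2 := (G.mem_neighborFinset u z2).mp hz2N
      have hf1 : emap s(u, z1) ∈ s := hmemS u z1 hadj1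
      have hf2 : emap s(u, z2) ∈ s := hmemS u z2 hadj2
      have hne12 : emap s(u, z1) ≠ emap s(u, z2) := by
        rw [hemapmk, hemapmk]
        intro hEq2
        simp only [Sym2.eq_iff] at hEq2
        rcases hEq2 with ⟨h1, h2⟩ | ⟨h1, h2⟩
        · exact hne (congrArg Prod.fst h2)
        · exact G.ne_of_adj hadj1 (congrArg Prod.fst h2).symm
      have hshare : ((u : V), part u z1) ∈ emap s(u, z1) := by
        rw [hemapmk]
        exact Sym2.mem_mk_left _ _
      have hshare2 : ((u : V), part u z1) ∈ emap s(u, z2) := by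
        rw [hemapmk, hEq]
        exact Sym2.mem_mk_left _ _
      exact hcH _ hf1 _ hf2 hne12 _ hshare hshare2 (hz1c.trans hz2c.symm)
    calc T.card ≤ (Finset.range (G.degree u / 2)).card :=
          Finset.card_le_card_of_injOn (part u) hmaps hinjT
      _ = G.degree u / 2 := Finset.card_range _
  show 2 * T.card ≤ G.degree u
  omega
end
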